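/- arXiv:1908.06076 — 2 statements merged into one kernel-verified Lean document; each statement's English description precedes it below -/
import Mathlib

section
/- Let n ≥ 1 and let V be an n × n unitary matrix all of whose entries lie in the ring ℤ[1/2] of dyadic fractions. Then there exist finitely many generators G₁, …, G_ℓ, each taken from the set {(-1)_[a], X_[a,b], (H⊗H)_[a,b,c,d] : a, b, c, d distinct elements of {1,…,n}}, such that G₁ ⋯ G_ℓ V = I. -/
open Matrix Complex

noncomputable section

/-- The `m`-level operator of type `W` with indices `f 0, …, f (m-1)`:
for injective `f`, its `(f j', f k')` entry is `W j' k'` and it agrees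
with the identity matrix elsewhere. -/
def levelOp {n m : ℕ} (f : Fin m → Fin n) (W : Matrix (Fin m) (Fin m) ℂ) :
    Matrix (Fin n) (Fin n) ℂ := fun j k =>
  (∑ j' : Fin m, ∑ k' : Fin m, if f j' = j ∧ f k' = k then W j' k' else 0) +
  (if j = k ∧ ∀ j' : Fin m, f j' ≠ j then 1 else 0)

/-- The NOT gate `X`. -/
def Xmat : Matrix (Fin 2) (Fin 2) ℂ := !![0, 1; 1, 0]

/-- The Hadamard gate `H`. -/
def Hmat : Matrix (Fin 2) (Fin 2) ℂ := (Real.sqrt 2 : ℂ)⁻¹ • !![1, 1; 1, -1]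

/-- The Kronecker product `H ⊗ H`, a 4×4 matrix. -/
def HHmat : Matrix (Fin 4) (Fin 4) ℂ :=
  (2 : ℂ)⁻¹ • !![1, 1, 1, 1; 1, -1, 1, -1; 1, 1, -1, -1; 1, -1, -1, 1]

/-- `G` is one of the generators `(-1)_[a]`, `X_[a,b]`, `(H⊗H)_[a,b,c,d]`
with `a, b, c, d` distinct. -/
def IsIntGen {n : ℕ} (G : Matrix (Fin n) (Fin n) ℂ) : Prop :=
  (∃ a : Fin n, G = levelOp ![a] !![-1]) ∨
  (∃ a b : Fin n, a ≠ b ∧ G = levelOp ![a, b] Xmat) ∨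
  (∃ a b c d : Fin n, a ≠ b ∧ a ≠ c ∧ a ≠ d ∧ b ≠ c ∧ b ≠ d ∧ c ≠ d ∧
    G = levelOp ![a, b, c, d] HHmat)

/-- `x` is a dyadic fraction: an element of `ℤ[1/2]` (viewed inside `ℂ`). -/
def IsDyadic (x : ℂ) : Prop := ∃ (u : ℤ) (q : ℕ), x = (u : ℂ) / 2 ^ q



variable {n : ℕ}
def Gneg (a : Fin n) : Matrix (Fin n) (Fin n) ℂ := levelOp ![a] !![-1]
def GX (a b : Fin n) : Matrix (Fin n) (Fin n) ℂ := levelOp ![a, b] Xmat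
def GHH (a b c d : Fin n) : Matrix (Fin n) (Fin n) ℂ := levelOp ![a, b, c, d] HHmat

lemma Gneg_apply (a i j : Fin n) :
    Gneg a i j = if i = a then (if j = a then -1 else 0) else (if j = i then 1 else 0) := by
  simp only [Gneg, levelOp, Fin.sum_univ_one, Matrix.cons_val_zero, Matrix.cons_val_fin_one]
  by_cases hia : i = a <;> by_cases hja : j = a <;> by_cases hij : i = j <;>
    simp_all [eq_comm]

lemma GX_apply (a b i j : Fin n) (hab : a ≠ b) :
    GX a b i j = if i = a then (if j = b then 1 else 0)
      else if i = b then (if j = a then 1 else 0)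
      else (if j = i then 1 else 0) := by
  simp only [GX, levelOp, Xmat, Fin.sum_univ_two, Matrix.cons_val_zero, Matrix.cons_val_one,
    Matrix.head_cons, Matrix.of_apply, Matrix.cons_val', Matrix.empty_val']
  by_cases hia : i = a <;> by_cases hib : i = b <;> by_cases hja : j = a <;>
    by_cases hjb : j = b <;> by_cases hij : i = j <;> simp_all [Fin.forall_fin_two, eq_comm]

lemma GHH_row_a (a b c d : Fin n) (hab : a ≠ b) (hac : a ≠ c) (had : a ≠ d) (j : Fin n) :
    GHH a b c d a j = (if a = j then 2⁻¹ else 0) + (if b = j then 2⁻¹ else 0)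
      + (if c = j then 2⁻¹ else 0) + (if d = j then 2⁻¹ else 0) := by
  simp [GHH, levelOp, HHmat, Fin.sum_univ_four, hab.symm, hac.symm, had.symm]
  exact fun _ => ⟨0, rfl⟩

lemma GHH_row_b (a b c d : Fin n) (hab : a ≠ b) (hbc : b ≠ c) (hbd : b ≠ d) (j : Fin n) :
    GHH a b c d b j = (if a = j then 2⁻¹ else 0) + (if b = j then -2⁻¹ else 0)
      + (if c = j then 2⁻¹ else 0) + (if d = j then -2⁻¹ else 0) := by
  simp [GHH, levelOp, HHmat, Fin.sum_univ_four, hab, hbc.symm, hbd.symm]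
  exact fun _ => ⟨1, rfl⟩

lemma GHH_row_c (a b c d : Fin n) (hac : a ≠ c) (hbc : b ≠ c) (hcd : c ≠ d) (j : Fin n) :
    GHH a b c d c j = (if a = j then 2⁻¹ else 0) + (if b = j then 2⁻¹ else 0)
      + (if c = j then -2⁻¹ else 0) + (if d = j then -2⁻¹ else 0) := by
  simp [GHH, levelOp, HHmat, Fin.sum_univ_four, hac, hbc, hcd.symm]
  exact fun _ => ⟨2, rfl⟩

lemma GHH_row_d (a b c d : Fin n) (had : a ≠ d) (hbd : b ≠ d) (hcd : c ≠ d) (j : Fin n) :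
    GHH a b c d d j = (if a = j then 2⁻¹ else 0) + (if b = j then -2⁻¹ else 0)
      + (if c = j then -2⁻¹ else 0) + (if d = j then 2⁻¹ else 0) := by
  simp [GHH, levelOp, HHmat, Fin.sum_univ_four, had, hbd, hcd, Matrix.vecHead, Matrix.vecTail]
  exact fun _ => ⟨3, rfl⟩

lemma GHH_row_other (a b c d i : Fin n) (hia : a ≠ i) (hib : b ≠ i) (hic : c ≠ i)
    (hid : d ≠ i) (j : Fin n) :
    GHH a b c d i j = if i = j then 1 else 0 := by
  simp [GHH, levelOp, HHmat, Fin.sum_univ_four, hia, hib, hic, hid, Fin.forall_fin_succ,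
    Fin.forall_fin_two]

lemma Gneg_mul (a : Fin n) (V : Matrix (Fin n) (Fin n) ℂ) (i k : Fin n) :
    (Gneg a * V) i k = if i = a then -V a k else V i k := by
  rw [Matrix.mul_apply]
  by_cases hia : i = a <;>
    simp [Gneg_apply, hia, ite_mul, Finset.sum_ite_eq, Finset.sum_ite_eq']

lemma GX_mul (a b : Fin n) (hab : a ≠ b) (V : Matrix (Fin n) (Fin n) ℂ) (i k : Fin n) :
    (GX a b * V) i k = if i = a then V b k else if i = b then V a k else V i k := by
  rw [Matrix.mul_apply]
  by_cases hia : i = a <;> by_cases hib : i = b <;>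
    simp [GX_apply, hab, hia, hib, ite_mul, Finset.sum_ite_eq, Finset.sum_ite_eq']

lemma GHH_mul (a b c d : Fin n) (hab : a ≠ b) (hac : a ≠ c) (had : a ≠ d) (hbc : b ≠ c)
    (hbd : b ≠ d) (hcd : c ≠ d) (V : Matrix (Fin n) (Fin n) ℂ) (i k : Fin n) :
    (GHH a b c d * V) i k =
      if i = a then (V a k + V b k + V c k + V d k) / 2
      else if i = b then (V a k - V b k + V c k - V d k) / 2
      else if i = c then (V a k + V b k - V c k - V d k) / 2
      else if i = d then (V a k - V b k - V c k + V d k) / 2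
      else V i k := by
  rw [Matrix.mul_apply]
  by_cases hia : i = a
  · subst hia
    simp only [GHH_row_a _ _ _ _ hab hac had]
    simp [add_mul, Finset.sum_add_distrib, ite_mul, Finset.sum_ite_eq, hab, hac, had]
    try field_simp
    try ring
  by_cases hib : i = b
  · subst hib
    simp only [GHH_row_b _ _ _ _ hab hbc hbd]
    simp [add_mul, Finset.sum_add_distrib, ite_mul, Finset.sum_ite_eq, hia, hbc, hbd]
    try field_simp
    try ring
  by_cases hic : i = c
  · subst hic
    simp only [GHH_row_c _ _ _ _ hac hbc hcd]
    simp [add_mul, Finset.sum_add_distrib, ite_mul, Finset.sum_ite_eq, hia, hib, hcd]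
    try field_simp
    try ring
  by_cases hid : i = d
  · subst hid
    simp only [GHH_row_d _ _ _ _ had hbd hcd]
    simp [add_mul, Finset.sum_add_distrib, ite_mul, Finset.sum_ite_eq, hia, hib, hic]
    try field_simp
    try ring
  · have h : ∀ j, GHH a b c d i j = if i = j then 1 else 0 :=
      GHH_row_other a b c d i (fun h => hia h.symm) (fun h => hib h.symm)
        (fun h => hic h.symm) (fun h => hid h.symm)
    simp only [h]
    simp [ite_mul, Finset.sum_ite_eq, hia, hib, hic, hid]

lemma GHH_apply (a b c d : Fin n) (hab : a ≠ b) (hac : a ≠ c) (had : a ≠ d) (hbc : b ≠ c)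
    (hbd : b ≠ d) (hcd : c ≠ d) (i j : Fin n) :
    GHH a b c d i j =
      if i = a then ((if a = j then 2⁻¹ else 0) + (if b = j then 2⁻¹ else 0)
        + (if c = j then 2⁻¹ else 0) + (if d = j then 2⁻¹ else 0))
      else if i = b then ((if a = j then 2⁻¹ else 0) + (if b = j then -2⁻¹ else 0)
        + (if c = j then 2⁻¹ else 0) + (if d = j then -2⁻¹ else 0))
      else if i = c then ((if a = j then 2⁻¹ else 0) + (if b = j then 2⁻¹ else 0)
        + (if c = j then -2⁻¹ else 0) + (if d = j then -2⁻¹ else 0))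
      else if i = d then ((if a = j then 2⁻¹ else 0) + (if b = j then -2⁻¹ else 0)
        + (if c = j then -2⁻¹ else 0) + (if d = j then 2⁻¹ else 0))
      else (if i = j then 1 else 0) := by
  by_cases hia : i = a
  · subst hia; simp [GHH_row_a _ _ _ _ hab hac had]
  by_cases hib : i = b
  · subst hib; simp [GHH_row_b _ _ _ _ hab hbc hbd, hia]
  by_cases hic : i = c
  · subst hic; simp [GHH_row_c _ _ _ _ hac hbc hcd, hia, hib]
  by_cases hid : i = d
  · subst hid; simp [GHH_row_d _ _ _ _ had hbd hcd, hia, hib, hic]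
  · rw [GHH_row_other a b c d i (fun h => hia h.symm) (fun h => hib h.symm)
      (fun h => hic h.symm) (fun h => hid h.symm)]
    simp [hia, hib, hic, hid]


lemma levelOp_star {m : ℕ} (f : Fin m → Fin n) (W : Matrix (Fin m) (Fin m) ℂ)
    (hW : ∀ x y, star (W y x) = W x y) : star (levelOp f W) = levelOp f W := by
  ext i j
  rw [Matrix.star_apply]
  simp only [levelOp, star_add, star_sum]
  congr 1
  · rw [Finset.sum_comm]
    refine Finset.sum_congr rfl fun j' _ => Finset.sum_congr rfl fun k' _ => ?_
    by_cases h : f j' = i ∧ f k' = j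
    · rw [if_pos ⟨h.2, h.1⟩, if_pos h, hW]
    · rw [if_neg (fun hc : _ ∧ _ => h ⟨hc.2, hc.1⟩), if_neg h, star_zero]
  · by_cases h : i = j ∧ ∀ j', f j' ≠ i
    · rw [if_pos ⟨h.1.symm, h.1 ▸ h.2⟩, if_pos h, star_one]
    · have : ¬(j = i ∧ ∀ j', f j' ≠ j) := by
        rintro ⟨h1, h2⟩; exact h ⟨h1.symm, h1 ▸ h2⟩
      rw [if_neg this, if_neg h, star_zero]

lemma star_Gneg (a : Fin n) : star (Gneg a) = Gneg a := by
  apply levelOp_star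
  intro x y
  fin_cases x <;> fin_cases y <;> norm_num

lemma star_GX (a b : Fin n) : star (GX a b) = GX a b := by
  apply levelOp_star
  intro x y
  fin_cases x <;> fin_cases y <;> norm_num [Xmat]

lemma star_GHH (a b c d : Fin n) : star (GHH a b c d) = GHH a b c d := by
  apply levelOp_star
  intro x y
  fin_cases x <;> fin_cases y <;> norm_num [HHmat]

lemma Gneg_unitary (a : Fin n) : Gneg a ∈ Matrix.unitaryGroup (Fin n) ℂ := by
  rw [Matrix.mem_unitaryGroup_iff, star_Gneg]
  ext i k
  rw [Gneg_mul, Matrix.one_apply, Gneg_apply, Gneg_apply]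
  split_ifs <;> subst_vars <;> simp_all

lemma GX_unitary (a b : Fin n) (hab : a ≠ b) : GX a b ∈ Matrix.unitaryGroup (Fin n) ℂ := by
  rw [Matrix.mem_unitaryGroup_iff, star_GX]
  ext i k
  rw [GX_mul _ _ hab, Matrix.one_apply, GX_apply _ _ _ _ hab, GX_apply _ _ _ _ hab,
    GX_apply _ _ _ _ hab]
  split_ifs <;> subst_vars <;> simp_all

lemma GHH_unitary (a b c d : Fin n) (hab : a ≠ b) (hac : a ≠ c) (had : a ≠ d) (hbc : b ≠ c)
    (hbd : b ≠ d) (hcd : c ≠ d) : GHH a b c d ∈ Matrix.unitaryGroup (Fin n) ℂ := by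
  rw [Matrix.mem_unitaryGroup_iff, star_GHH]
  ext i k
  rw [GHH_mul _ _ _ _ hab hac had hbc hbd hcd, Matrix.one_apply,
    GHH_row_a _ _ _ _ hab hac had, GHH_row_b _ _ _ _ hab hbc hbd,
    GHH_row_c _ _ _ _ hac hbc hcd, GHH_row_d _ _ _ _ had hbd hcd]
  by_cases hia : i = a
  · subst hia
    simp only [if_pos rfl]
    split_ifs <;> subst_vars <;> simp_all <;> norm_num
  by_cases hib : i = b
  · subst hib
    rw [if_neg hia, if_pos rfl]
    split_ifs <;> subst_vars <;> simp_all <;> norm_num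
  by_cases hic : i = c
  · subst hic
    rw [if_neg hia, if_neg hib, if_pos rfl]
    split_ifs <;> subst_vars <;> simp_all <;> norm_num
  by_cases hid : i = d
  · subst hid
    rw [if_neg hia, if_neg hib, if_neg hic, if_pos rfl]
    split_ifs <;> subst_vars <;> simp_all <;> norm_num
  · rw [if_neg hia, if_neg hib, if_neg hic, if_neg hid,
      GHH_row_other a b c d i (fun h => hia h.symm) (fun h => hib h.symm)
        (fun h => hic h.symm) (fun h => hid h.symm)]
lemma IsDyadic.add {x y : ℂ} (hx : IsDyadic x) (hy : IsDyadic y) : IsDyadic (x + y) := by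
  obtain ⟨u, q, rfl⟩ := hx; obtain ⟨v, r, rfl⟩ := hy
  refine ⟨u * 2 ^ r + v * 2 ^ q, q + r, ?_⟩
  rw [div_add_div _ _ (pow_ne_zero q two_ne_zero) (pow_ne_zero r two_ne_zero), pow_add]
  push_cast
  ring_nf

lemma IsDyadic.neg {x : ℂ} (hx : IsDyadic x) : IsDyadic (-x) := by
  obtain ⟨u, q, rfl⟩ := hx
  exact ⟨-u, q, by push_cast; ring⟩

lemma IsDyadic.sub {x y : ℂ} (hx : IsDyadic x) (hy : IsDyadic y) : IsDyadic (x - y) := by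
  rw [sub_eq_add_neg]; exact hx.add hy.neg

lemma IsDyadic.half {x : ℂ} (hx : IsDyadic x) : IsDyadic (x / 2) := by
  obtain ⟨u, q, rfl⟩ := hx
  refine ⟨u, q + 1, by rw [pow_succ]; field_simp⟩

lemma exists_common_denom {n : ℕ} (v : Fin n → ℂ) (h : ∀ i, IsDyadic (v i)) :
    ∃ (k : ℕ) (w : Fin n → ℤ), ∀ i, v i = (w i : ℂ) / 2 ^ k := by
  choose u q hq using h
  refine ⟨Finset.univ.sup q, fun i => u i * 2 ^ (Finset.univ.sup q - q i), fun i => ?_⟩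
  have hle : q i ≤ Finset.univ.sup q := Finset.le_sup (Finset.mem_univ i)
  rw [hq i]
  have h2 : (2 : ℂ) ^ Finset.univ.sup q = 2 ^ q i * 2 ^ (Finset.univ.sup q - q i) := by
    rw [← pow_add]; congr 1; omega
  rw [h2]
  push_cast
  rw [div_eq_div_iff (pow_ne_zero _ two_ne_zero)
    (mul_ne_zero (pow_ne_zero _ two_ne_zero) (pow_ne_zero _ two_ne_zero))]
  ring

lemma sq_zmod4 (w : ℤ) : ((w : ZMod 4)) ^ 2 = if w % 2 = 1 then 1 else 0 := by
  rcases Int.even_or_odd w with ⟨m, rfl⟩ | ⟨m, rfl⟩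
  · rw [if_neg (by omega)]
    have : ((m + m : ℤ) : ZMod 4) ^ 2 = 4 * (m : ZMod 4) ^ 2 := by push_cast; ring
    rw [this, show (4 : ZMod 4) = 0 by decide, zero_mul]
  · rw [if_pos (by omega)]
    have : ((2 * m + 1 : ℤ) : ZMod 4) ^ 2 = 4 * ((m : ZMod 4) ^ 2 + m) + 1 := by
      push_cast; ring
    rw [this, show (4 : ZMod 4) = 0 by decide, zero_mul, zero_add]

lemma odd_card_div4 {n k : ℕ} (w : Fin n → ℤ) (hk : 1 ≤ k)
    (h : ∑ i, (w i) ^ 2 = 4 ^ k) :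
    4 ∣ (Finset.univ.filter (fun i => w i % 2 = 1)).card := by
  have h2 : ∑ i, ((w i : ZMod 4)) ^ 2
      = ((Finset.univ.filter (fun i => w i % 2 = 1)).card : ZMod 4) := by
    simp only [sq_zmod4]
    rw [Finset.sum_boole]
  have h3 : ∑ i, ((w i : ZMod 4)) ^ 2 = 0 := by
    have : ∑ i, ((w i : ZMod 4)) ^ 2 = (((∑ i, (w i) ^ 2 : ℤ) : ZMod 4)) := by push_cast; rfl
    rw [this, h]
    push_cast
    rw [show (4 : ZMod 4) = 0 by decide, zero_pow (by omega : k ≠ 0)]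
  rw [h2] at h3
  exact (ZMod.natCast_eq_zero_iff _ _).mp h3

lemma sum_sq_eq_one {n : ℕ} (w : Fin n → ℤ) (h : ∑ i, (w i) ^ 2 = 1) :
    ∃ a, (w a = 1 ∨ w a = -1) ∧ ∀ j, j ≠ a → w j = 0 := by
  have hnz : ∃ a, w a ≠ 0 := by
    by_contra hc
    push_neg at hc
    simp [hc] at h
  obtain ⟨a, ha⟩ := hnz
  have h1 : 1 ≤ (w a) ^ 2 := by rcases ha.lt_or_gt with hlt | hlt <;> nlinarith
  have hsum : ∑ j ∈ Finset.univ.erase a, (w j) ^ 2 + (w a) ^ 2 = 1 := by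
    rw [← h]
    exact Finset.sum_erase_add Finset.univ (fun i => (w i) ^ 2) (Finset.mem_univ a)
  have hnn : 0 ≤ ∑ j ∈ Finset.univ.erase a, (w j) ^ 2 :=
    Finset.sum_nonneg fun j _ => sq_nonneg _
  have h2 : ∑ j ∈ Finset.univ.erase a, (w j) ^ 2 = 0 := by omega
  refine ⟨a, ?_, fun j hj => ?_⟩
  · have hsq : w a ^ 2 = 1 := by omega
    have : IsUnit (w a) := IsUnit.of_mul_eq_one (w a) (by rw [← pow_two]; exact hsq)
    exact Int.isUnit_iff.mp this
  · have := (Finset.sum_eq_zero_iff_of_nonneg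
      (fun j _ => sq_nonneg (w j))).mp h2 j (Finset.mem_erase.mpr ⟨hj, Finset.mem_univ j⟩)
    exact pow_eq_zero_iff (by norm_num) |>.mp this

lemma exists_four {α : Type*} [DecidableEq α] (s : Finset α) (h : 4 ≤ s.card) :
    ∃ a b c d, a ∈ s ∧ b ∈ s ∧ c ∈ s ∧ d ∈ s ∧
      a ≠ b ∧ a ≠ c ∧ a ≠ d ∧ b ≠ c ∧ b ≠ d ∧ c ≠ d := by
  obtain ⟨a, ha⟩ := Finset.card_pos.mp (by omega : 0 < s.card)
  have h1 : 3 ≤ (s.erase a).card := by rw [Finset.card_erase_of_mem ha]; omega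
  obtain ⟨b, hb⟩ := Finset.card_pos.mp (by omega : 0 < (s.erase a).card)
  have h2 : 2 ≤ ((s.erase a).erase b).card := by rw [Finset.card_erase_of_mem hb]; omega
  obtain ⟨c, hc⟩ := Finset.card_pos.mp (by omega : 0 < ((s.erase a).erase b).card)
  have h3 : 1 ≤ (((s.erase a).erase b).erase c).card := by
    rw [Finset.card_erase_of_mem hc]; omega
  obtain ⟨d, hd⟩ := Finset.card_pos.mp (by omega : 0 < (((s.erase a).erase b).erase c).card)
  simp only [Finset.mem_erase] at hb hc hd
  exact ⟨a, b, c, d, ha, hb.2, hc.2.2, hd.2.2.2, fun h => hb.1 h.symm, fun h => hc.2.1 h.symm,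
    fun h => hd.2.2.1 h.symm, fun h => hc.1 h.symm, fun h => hd.2.1 h.symm,
    fun h => hd.1 h.symm⟩

variable {n : ℕ} {V : Matrix (Fin n) (Fin n) ℂ}

def ColsId (t : ℕ) (V : Matrix (Fin n) (Fin n) ℂ) : Prop :=
  ∀ c : Fin n, (c : ℕ) < t → ∀ i, V i c = if i = c then 1 else 0

lemma row_norm (hV : V ∈ Matrix.unitaryGroup (Fin n) ℂ) (i : Fin n) :
    ∑ c, Complex.normSq (V i c) = 1 := by
  have h0 := Matrix.mem_unitaryGroup_iff.mp hV
  have h1 : (V * star V) i i = 1 := by rw [h0, Matrix.one_apply_eq]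
  rw [Matrix.mul_apply] at h1
  have h2 : ∑ c, (Complex.normSq (V i c) : ℂ) = 1 := by
    rw [← h1]
    refine Finset.sum_congr rfl fun c _ => ?_
    rw [Matrix.star_apply, ← Complex.mul_conj]
    rfl
  exact_mod_cast h2

lemma col_norm (hV : V ∈ Matrix.unitaryGroup (Fin n) ℂ) (m : Fin n) :
    ∑ i, (starRingEnd ℂ) (V i m) * V i m = 1 := by
  have h0 := Matrix.mem_unitaryGroup_iff'.mp hV
  have h1 : (star V * V) m m = 1 := by rw [h0, Matrix.one_apply_eq]
  rw [Matrix.mul_apply] at h1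
  rw [← h1]
  refine Finset.sum_congr rfl fun i _ => ?_
  rw [Matrix.star_apply]
  rfl

lemma rowZero (hV : V ∈ Matrix.unitaryGroup (Fin n) ℂ) {t : ℕ} (hcols : ColsId t V)
    {i c : Fin n} (hi : (i : ℕ) < t) (hc : c ≠ i) : V i c = 0 := by
  have h1 := row_norm hV i
  have hii : Complex.normSq (V i i) = 1 := by
    rw [hcols i hi i, if_pos rfl]; simp
  have hsum := Finset.sum_erase_add Finset.univ (fun j => Complex.normSq (V i j))
    (Finset.mem_univ i)
  have hz : ∑ j ∈ Finset.univ.erase i, Complex.normSq (V i j) = 0 := by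
    linarith
  have := (Finset.sum_eq_zero_iff_of_nonneg
    (fun j _ => Complex.normSq_nonneg _)).mp hz c (Finset.mem_erase.mpr ⟨hc, Finset.mem_univ c⟩)
  exact Complex.normSq_eq_zero.mp this

lemma col_sum_sq (hV : V ∈ Matrix.unitaryGroup (Fin n) ℂ) (m : Fin n) (w : Fin n → ℤ) (k : ℕ)
    (hrep : ∀ i, V i m = (w i : ℂ) / 2 ^ k) : ∑ i, (w i) ^ 2 = 4 ^ k := by
  have h1 := col_norm hV m
  have h2 : ∀ i, (starRingEnd ℂ) (V i m) * V i m = ((w i : ℂ) ^ 2) / 4 ^ k := by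
    intro i
    rw [hrep i]
    have hc : (starRingEnd ℂ) ((w i : ℂ) / 2 ^ k) = (w i : ℂ) / 2 ^ k := by
      simp [map_div₀, map_pow, map_intCast, Complex.conj_ofNat]
    rw [hc, div_mul_div_comm, ← pow_two, ← pow_two, ← pow_mul, mul_comm k 2, pow_mul]
    norm_num
  rw [Finset.sum_congr rfl fun i _ => h2 i, ← Finset.sum_div] at h1
  have h3 : (∑ i, ((w i : ℂ)) ^ 2) = 4 ^ k := by
    field_simp at h1
    exact_mod_cast h1
  have h4 : (((∑ i, (w i) ^ 2 : ℤ)) : ℂ) = (((4 ^ k : ℤ)) : ℂ) := by push_cast; exact h3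
  exact_mod_cast h4


variable {n : ℕ}

lemma isIntGen_Gneg (a : Fin n) : IsIntGen (Gneg a) := Or.inl ⟨a, rfl⟩
lemma isIntGen_GX (a b : Fin n) (h : a ≠ b) : IsIntGen (GX a b) := Or.inr (Or.inl ⟨a, b, h, rfl⟩)
lemma isIntGen_GHH (a b c d : Fin n) (hab : a ≠ b) (hac : a ≠ c) (had : a ≠ d) (hbc : b ≠ c)
    (hbd : b ≠ d) (hcd : c ≠ d) : IsIntGen (GHH a b c d) :=
  Or.inr (Or.inr ⟨a, b, c, d, hab, hac, had, hbc, hbd, hcd, rfl⟩)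

/-- The invariant carried along the reduction of column `m`. -/
def ColRep (m : Fin n) (k : ℕ) (V : Matrix (Fin n) (Fin n) ℂ) (w : Fin n → ℤ) : Prop :=
  V ∈ Matrix.unitaryGroup (Fin n) ℂ ∧ (∀ i j, IsDyadic (V i j)) ∧ ColsId (m : ℕ) V ∧
    ∀ i, V i m = (w i : ℂ) / 2 ^ k

lemma ColRep.w_zero {m : Fin n} {k V w} (h : ColRep m k V w) {i : Fin n}
    (hi : (i : ℕ) < (m : ℕ)) : w i = 0 := by
  have h0 : V i m = 0 := rowZero h.1 h.2.2.1 hi (fun hc => by simp [hc] at hi)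
  rw [h.2.2.2 i] at h0
  have : (w i : ℂ) = 0 := by
    field_simp at h0
    exact_mod_cast h0
  exact_mod_cast this

lemma ColRep.sumsq {m : Fin n} {k V w} (h : ColRep m k V w) : ∑ i, (w i) ^ 2 = 4 ^ k :=
  col_sum_sq h.1 m w k h.2.2.2

lemma ColRep.idx_ge {m : Fin n} {k V w} (h : ColRep m k V w) {i : Fin n} (hi : w i ≠ 0) :
    (m : ℕ) ≤ (i : ℕ) := by
  by_contra hc
  exact hi (h.w_zero (by omega))

/-- Applying a sign-flip generator. -/
lemma step_neg {m : Fin n} {k : ℕ} {V : Matrix (Fin n) (Fin n) ℂ} {w : Fin n → ℤ}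
    (h : ColRep m k V w) (x : Fin n) (hx : (m : ℕ) ≤ (x : ℕ)) :
    ColRep m k (Gneg x * V) (Function.update w x (-(w x))) := by
  obtain ⟨hU, hD, hC, hR⟩ := h
  refine ⟨mul_mem (Gneg_unitary x) hU, ?_, ?_, ?_⟩
  · intro i j
    rw [Gneg_mul]
    split_ifs
    · exact (hD x j).neg
    · exact hD i j
  · intro c hc i
    rw [Gneg_mul]
    by_cases hix : i = x
    · subst hix
      have hic : i ≠ c := by
        intro hic
        rw [hic] at hx
        omega
      rw [if_pos rfl, hC c hc i, if_neg hic, neg_zero]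
    · rw [if_neg hix]
      exact hC c hc i
  · intro i
    rw [Gneg_mul]
    by_cases hix : i = x
    · subst hix
      rw [if_pos rfl, Function.update_self, hR i]
      push_cast
      ring
    · rw [if_neg hix, Function.update_of_ne hix]
      exact hR i

/-- Flip the sign at an odd position so that it becomes `1 mod 4`. -/
lemma step_flip {m : Fin n} {k : ℕ} {V : Matrix (Fin n) (Fin n) ℂ} {w : Fin n → ℤ}
    (h : ColRep m k V w) (x : Fin n) (hodd : w x % 2 = 1) :
    ∃ (L : List (Matrix (Fin n) (Fin n) ℂ)) (w₁ : Fin n → ℤ),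
      (∀ G ∈ L, IsIntGen G) ∧ ColRep m k (L.prod * V) w₁ ∧ w₁ x % 4 = 1 ∧
      (∀ j, j ≠ x → w₁ j = w j) ∧ (∀ j, w₁ j % 2 = w j % 2) := by
  have hx : (m : ℕ) ≤ (x : ℕ) := h.idx_ge (by omega)
  by_cases h4 : w x % 4 = 1
  · exact ⟨[], w, by simp, by simpa using h, h4, fun j _ => rfl, fun j => rfl⟩
  · refine ⟨[Gneg x], Function.update w x (-(w x)), ?_, ?_, ?_, ?_, ?_⟩
    · intro G hG
      rw [List.mem_singleton] at hG
      rw [hG]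
      exact isIntGen_Gneg x
    · rw [List.prod_singleton]
      exact step_neg h x hx
    · rw [Function.update_self]
      omega
    · intro j hj
      rw [Function.update_of_ne hj]
    · intro j
      by_cases hj : j = x
      · subst hj
        rw [Function.update_self]
        omega
      · rw [Function.update_of_ne hj]

/-- Applying `H⊗H` at four positions which are all `1 mod 4` halves them. -/
lemma step_HH {m : Fin n} {k : ℕ} {V : Matrix (Fin n) (Fin n) ℂ} {w : Fin n → ℤ}
    (h : ColRep m k V w) (a b c d : Fin n)
    (hab : a ≠ b) (hac : a ≠ c) (had : a ≠ d) (hbc : b ≠ c) (hbd : b ≠ d) (hcd : c ≠ d)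
    (ha : w a % 4 = 1) (hb : w b % 4 = 1) (hc : w c % 4 = 1) (hd : w d % 4 = 1) :
    ∃ w₁ : Fin n → ℤ,
      ColRep m k (GHH a b c d * V) w₁ ∧
      (∀ j, j ≠ a → j ≠ b → j ≠ c → j ≠ d → w₁ j = w j) ∧
      w₁ a % 2 = 0 ∧ w₁ b % 2 = 0 ∧ w₁ c % 2 = 0 ∧ w₁ d % 2 = 0 := by
  obtain ⟨hU, hD, hC, hR⟩ := h
  have hma : (m : ℕ) ≤ (a : ℕ) := ColRep.idx_ge ⟨hU, hD, hC, hR⟩ (by omega)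
  have hmb : (m : ℕ) ≤ (b : ℕ) := ColRep.idx_ge ⟨hU, hD, hC, hR⟩ (by omega)
  have hmc : (m : ℕ) ≤ (c : ℕ) := ColRep.idx_ge ⟨hU, hD, hC, hR⟩ (by omega)
  have hmd : (m : ℕ) ≤ (d : ℕ) := ColRep.idx_ge ⟨hU, hD, hC, hR⟩ (by omega)
  obtain ⟨ta, hta, hta2⟩ : ∃ t, w a + w b + w c + w d = 2 * t ∧ t % 2 = 0 :=
    ⟨(w a + w b + w c + w d) / 2, by omega, by omega⟩
  obtain ⟨tb, htb, htb2⟩ : ∃ t, w a - w b + w c - w d = 2 * t ∧ t % 2 = 0 :=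
    ⟨(w a - w b + w c - w d) / 2, by omega, by omega⟩
  obtain ⟨tc, htc, htc2⟩ : ∃ t, w a + w b - w c - w d = 2 * t ∧ t % 2 = 0 :=
    ⟨(w a + w b - w c - w d) / 2, by omega, by omega⟩
  obtain ⟨td, htd, htd2⟩ : ∃ t, w a - w b - w c + w d = 2 * t ∧ t % 2 = 0 :=
    ⟨(w a - w b - w c + w d) / 2, by omega, by omega⟩
  refine ⟨Function.update (Function.update (Function.update (Function.update w a ta) b tb)
    c tc) d td, ⟨mul_mem (GHH_unitary a b c d hab hac had hbc hbd hcd) hU, ?_, ?_, ?_⟩,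
    ?_, ?_, ?_, ?_, ?_⟩
  · intro i j
    rw [GHH_mul _ _ _ _ hab hac had hbc hbd hcd]
    split_ifs
    · exact ((((hD a j).add (hD b j)).add (hD c j)).add (hD d j)).half
    · exact ((((hD a j).sub (hD b j)).add (hD c j)).sub (hD d j)).half
    · exact ((((hD a j).add (hD b j)).sub (hD c j)).sub (hD d j)).half
    · exact ((((hD a j).sub (hD b j)).sub (hD c j)).add (hD d j)).half
    · exact hD i j
  · intro col hcol i
    rw [GHH_mul _ _ _ _ hab hac had hbc hbd hcd]
    have hz : ∀ x : Fin n, (m : ℕ) ≤ (x : ℕ) → V x col = 0 := by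
      intro x hx
      rw [hC col hcol x, if_neg (fun hxc => by rw [hxc] at hx; omega)]
    have hne : ∀ x : Fin n, (m : ℕ) ≤ (x : ℕ) → x ≠ col := by
      intro x hx hxc
      rw [hxc] at hx
      omega
    by_cases h1 : i = a
    · rw [if_pos h1, hz _ hma, hz _ hmb, hz _ hmc, hz _ hmd, h1, if_neg (hne _ hma)]
      norm_num
    rw [if_neg h1]
    by_cases h2 : i = b
    · rw [if_pos h2, hz _ hma, hz _ hmb, hz _ hmc, hz _ hmd, h2, if_neg (hne _ hmb)]
      norm_num
    rw [if_neg h2]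
    by_cases h3 : i = c
    · rw [if_pos h3, hz _ hma, hz _ hmb, hz _ hmc, hz _ hmd, h3, if_neg (hne _ hmc)]
      norm_num
    rw [if_neg h3]
    by_cases h4 : i = d
    · rw [if_pos h4, hz _ hma, hz _ hmb, hz _ hmc, hz _ hmd, h4, if_neg (hne _ hmd)]
      norm_num
    rw [if_neg h4]
    exact hC col hcol i
  · intro i
    rw [GHH_mul _ _ _ _ hab hac had hbc hbd hcd]
    split_ifs with h1 h2 h3 h4
    · rw [h1, Function.update_of_ne had, Function.update_of_ne hac, Function.update_of_ne hab,
        Function.update_self, hR a, hR b, hR c, hR d]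
      have : (w a : ℂ) + w b + w c + w d = 2 * ta := by exact_mod_cast hta
      rw [← add_div, ← add_div, ← add_div, this]
      field_simp
    · rw [h2, Function.update_of_ne hbd, Function.update_of_ne hbc, Function.update_self,
        hR a, hR b, hR c, hR d]
      have : (w a : ℂ) - w b + w c - w d = 2 * tb := by exact_mod_cast htb
      rw [div_sub_div_same, ← add_div, div_sub_div_same, this]
      field_simp
    · rw [h3, Function.update_of_ne hcd, Function.update_self, hR a, hR b, hR c, hR d]
      have : (w a : ℂ) + w b - w c - w d = 2 * tc := by exact_mod_cast htc
      rw [← add_div, div_sub_div_same, div_sub_div_same, this]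
      field_simp
    · rw [h4, Function.update_self, hR a, hR b, hR c, hR d]
      have : (w a : ℂ) - w b - w c + w d = 2 * td := by exact_mod_cast htd
      rw [div_sub_div_same, div_sub_div_same, ← add_div, this]
      field_simp
    · rw [Function.update_of_ne h4, Function.update_of_ne h3, Function.update_of_ne h2,
        Function.update_of_ne h1]
      exact hR i
  · intro j hja hjb hjc hjd
    rw [Function.update_of_ne hjd, Function.update_of_ne hjc, Function.update_of_ne hjb,
      Function.update_of_ne hja]
  · rw [Function.update_of_ne had, Function.update_of_ne hac, Function.update_of_ne hab,
      Function.update_self]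
    omega
  · rw [Function.update_of_ne hbd, Function.update_of_ne hbc, Function.update_self]
    omega
  · rw [Function.update_of_ne hcd, Function.update_self]
    omega
  · rw [Function.update_self]
    omega

/-- Kill all odd entries (for positive denominator exponent). -/
lemma evenize (m : Fin n) : ∀ (N k : ℕ) (V : Matrix (Fin n) (Fin n) ℂ) (w : Fin n → ℤ),
    ColRep m (k + 1) V w → (Finset.univ.filter fun i => w i % 2 = 1).card ≤ N →
    ∃ (L : List (Matrix (Fin n) (Fin n) ℂ)) (w₁ : Fin n → ℤ),
      (∀ G ∈ L, IsIntGen G) ∧ ColRep m (k + 1) (L.prod * V) w₁ ∧ ∀ i, w₁ i % 2 = 0 := by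
  intro N
  induction N with
  | zero =>
    intro k V w h hcard
    refine ⟨[], w, by simp, by simpa using h, fun i => ?_⟩
    have h0 : (Finset.univ.filter fun i => w i % 2 = 1) = ∅ :=
      Finset.card_eq_zero.mp (by omega)
    have : i ∉ (Finset.univ.filter fun i => w i % 2 = 1) := by
      rw [h0]; exact Finset.notMem_empty i
    rw [Finset.mem_filter] at this
    push_neg at this
    have := this (Finset.mem_univ i)
    omega
  | succ N ih =>
    intro k V w h hcard
    by_cases hall : ∀ i, w i % 2 = 0
    · exact ⟨[], w, by simp, by simpa using h, hall⟩
    push_neg at hall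
    obtain ⟨i0, hi0⟩ := hall
    have hi0mem : i0 ∈ (Finset.univ.filter fun i => w i % 2 = 1) := by
      rw [Finset.mem_filter]; exact ⟨Finset.mem_univ i0, by omega⟩
    have hdvd : 4 ∣ (Finset.univ.filter fun i => w i % 2 = 1).card :=
      odd_card_div4 w (by omega) h.sumsq
    have h4le : 4 ≤ (Finset.univ.filter fun i => w i % 2 = 1).card := by
      have hpos : 0 < (Finset.univ.filter fun i => w i % 2 = 1).card :=
        Finset.card_pos.mpr ⟨i0, hi0mem⟩
      obtain ⟨q, hq⟩ := hdvd
      omega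
    obtain ⟨a, b, c, d, hamem, hbmem, hcmem, hdmem, hab, hac, had, hbc, hbd, hcd⟩ :=
      exists_four _ h4le
    have haodd : w a % 2 = 1 := (Finset.mem_filter.mp hamem).2
    have hbodd : w b % 2 = 1 := (Finset.mem_filter.mp hbmem).2
    have hcodd : w c % 2 = 1 := (Finset.mem_filter.mp hcmem).2
    have hdodd : w d % 2 = 1 := (Finset.mem_filter.mp hdmem).2
    obtain ⟨La, w1, hLa, h1, ha4, haoff, hapar⟩ := step_flip h a haodd
    obtain ⟨Lb, w2, hLb, h2, hb4, hboff, hbpar⟩ := step_flip h1 b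
      (by rw [hapar b]; exact hbodd)
    obtain ⟨Lc, w3, hLc, h3, hc4, hcoff, hcpar⟩ := step_flip h2 c
      (by rw [hbpar c, hapar c]; exact hcodd)
    obtain ⟨Ld, w4, hLd, h4, hd4, hdoff, hdpar⟩ := step_flip h3 d
      (by rw [hcpar d, hbpar d, hapar d]; exact hdodd)
    have hA4 : w4 a % 4 = 1 := by rw [hdoff a had, hcoff a hac, hboff a hab]; exact ha4
    have hB4 : w4 b % 4 = 1 := by rw [hdoff b hbd, hcoff b hbc]; exact hb4
    have hC4 : w4 c % 4 = 1 := by rw [hdoff c hcd]; exact hc4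
    obtain ⟨w5, h5, hoff5, pa, pb, pc, pd⟩ :=
      step_HH h4 a b c d hab hac had hbc hbd hcd hA4 hB4 hC4 hd4
    have hsub : (Finset.univ.filter fun i => w5 i % 2 = 1) ⊆
        ((((Finset.univ.filter fun i => w i % 2 = 1).erase a).erase b).erase c).erase d := by
      intro j hj
      rw [Finset.mem_filter] at hj
      have hja : j ≠ a := fun e => by rw [e] at hj; omega
      have hjb : j ≠ b := fun e => by rw [e] at hj; omega
      have hjc : j ≠ c := fun e => by rw [e] at hj; omega
      have hjd : j ≠ d := fun e => by rw [e] at hj; omega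
      have hw5j : w5 j = w4 j := hoff5 j hja hjb hjc hjd
      have hpar : w4 j % 2 = w j % 2 := by rw [hdpar j, hcpar j, hbpar j, hapar j]
      refine Finset.mem_erase.mpr ⟨hjd, Finset.mem_erase.mpr ⟨hjc,
        Finset.mem_erase.mpr ⟨hjb, Finset.mem_erase.mpr ⟨hja, ?_⟩⟩⟩⟩
      rw [Finset.mem_filter]
      refine ⟨Finset.mem_univ j, by omega⟩
    have hcard5 : (Finset.univ.filter fun i => w5 i % 2 = 1).card ≤ N := by
      have hm1 : b ∈ (Finset.univ.filter fun i => w i % 2 = 1).erase a :=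
        Finset.mem_erase.mpr ⟨fun e => hab e.symm, hbmem⟩
      have hm2 : c ∈ ((Finset.univ.filter fun i => w i % 2 = 1).erase a).erase b :=
        Finset.mem_erase.mpr ⟨fun e => hbc e.symm, Finset.mem_erase.mpr
          ⟨fun e => hac e.symm, hcmem⟩⟩
      have hm3 : d ∈ (((Finset.univ.filter fun i => w i % 2 = 1).erase a).erase b).erase c :=
        Finset.mem_erase.mpr ⟨fun e => hcd e.symm, Finset.mem_erase.mpr ⟨fun e => hbd e.symm,
          Finset.mem_erase.mpr ⟨fun e => had e.symm, hdmem⟩⟩⟩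
      have c1 := Finset.card_erase_of_mem hamem
      have c2 := Finset.card_erase_of_mem hm1
      have c3 := Finset.card_erase_of_mem hm2
      have c4 := Finset.card_erase_of_mem hm3
      have := Finset.card_le_card hsub
      omega
    obtain ⟨L6, w6, hL6, h6, heven6⟩ := ih k _ w5 h5 hcard5
    refine ⟨L6 ++ ([GHH a b c d] ++ (Ld ++ (Lc ++ (Lb ++ La)))), w6, ?_, ?_, heven6⟩
    · intro G hG
      simp only [List.mem_append, List.mem_singleton] at hG
      rcases hG with h' | h' | h' | h' | h' | h'
      · exact hL6 G h'
      · rw [h']; exact isIntGen_GHH a b c d hab hac had hbc hbd hcd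
      · exact hLd G h'
      · exact hLc G h'
      · exact hLb G h'
      · exact hLa G h'
    · have hprod : (L6 ++ ([GHH a b c d] ++ (Ld ++ (Lc ++ (Lb ++ La))))).prod * V
          = L6.prod * (GHH a b c d * (Ld.prod * (Lc.prod * (Lb.prod * (La.prod * V))))) := by
        simp [List.prod_append, mul_assoc]
      rw [hprod]
      exact h6

/-- Reduce column `m` to the standard basis vector `e m`. -/
lemma colReduce (m : Fin n) : ∀ (k : ℕ) (V : Matrix (Fin n) (Fin n) ℂ) (w : Fin n → ℤ),
    ColRep m k V w →
    ∃ L : List (Matrix (Fin n) (Fin n) ℂ),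
      (∀ G ∈ L, IsIntGen G) ∧ (L.prod * V) ∈ Matrix.unitaryGroup (Fin n) ℂ ∧
      (∀ i j, IsDyadic ((L.prod * V) i j)) ∧ ColsId ((m : ℕ) + 1) (L.prod * V) := by
  intro k
  induction k with
  | zero =>
    intro V w h
    obtain ⟨a, haval, hzero⟩ := sum_sq_eq_one w (by simpa using h.sumsq)
    have hwa : w a ≠ 0 := by rcases haval with h' | h' <;> omega
    have hma : (m : ℕ) ≤ (a : ℕ) := h.idx_ge hwa
    -- first make the entry +1
    have hstep1 : ∃ (L1 : List (Matrix (Fin n) (Fin n) ℂ)) (w1 : Fin n → ℤ),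
        (∀ G ∈ L1, IsIntGen G) ∧ ColRep m 0 (L1.prod * V) w1 ∧ w1 a = 1 ∧
        ∀ j, j ≠ a → w1 j = 0 := by
      rcases haval with h' | h'
      · exact ⟨[], w, by simp, by simpa using h, h', hzero⟩
      · refine ⟨[Gneg a], Function.update w a (-(w a)), ?_, ?_, ?_, ?_⟩
        · intro G hG
          rw [List.mem_singleton] at hG
          rw [hG]
          exact isIntGen_Gneg a
        · rw [List.prod_singleton]
          exact step_neg h a hma
        · rw [Function.update_self, h']
          ring
        · intro j hj
          rw [Function.update_of_ne hj]
          exact hzero j hj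
    obtain ⟨L1, w1, hL1, h1, hw1a, hw1z⟩ := hstep1
    obtain ⟨hU1, hD1, hC1, hR1⟩ := h1
    have hcol1 : ∀ i, (L1.prod * V) i m = if i = a then 1 else 0 := by
      intro i
      rw [hR1 i, pow_zero, div_one]
      by_cases hia : i = a
      · rw [if_pos hia, hia, hw1a]
        norm_num
      · rw [if_neg hia, hw1z i hia]
        norm_num
    by_cases ham : a = m
    · refine ⟨L1, hL1, hU1, hD1, ?_⟩
      intro c hc i
      by_cases hcm : (c : ℕ) < (m : ℕ)
      · exact hC1 c hcm i
      · have hceq : c = m := by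
          apply Fin.ext
          omega
        rw [hceq, hcol1 i, ham]
    · refine ⟨GX a m :: L1, ?_, ?_, ?_, ?_⟩
      · intro G hG
        rcases List.mem_cons.mp hG with h' | h'
        · rw [h']
          exact isIntGen_GX a m ham
        · exact hL1 G h'
      · rw [List.prod_cons, mul_assoc]
        exact mul_mem (GX_unitary a m ham) hU1
      · intro i j
        rw [List.prod_cons, mul_assoc, GX_mul _ _ ham]
        split_ifs
        · exact hD1 m j
        · exact hD1 a j
        · exact hD1 i j
      · intro c hc i
        rw [List.prod_cons, mul_assoc, GX_mul _ _ ham]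
        by_cases hcm : (c : ℕ) < (m : ℕ)
        · have hac : a ≠ c := fun e => by rw [e] at hma; omega
          have hmc : m ≠ c := fun e => by rw [e] at hcm; omega
          by_cases hia : i = a
          · rw [if_pos hia, hC1 c hcm m, if_neg hmc, hia, if_neg hac]
          rw [if_neg hia]
          by_cases him : i = m
          · rw [if_pos him, hC1 c hcm a, if_neg hac, him, if_neg hmc]
          · rw [if_neg him]
            exact hC1 c hcm i
        · have hceq : c = m := by
            apply Fin.ext
            omega
          rw [hceq]
          by_cases hia : i = a
          · rw [if_pos hia, hcol1 m, if_neg (fun e => ham e.symm), hia, if_neg ham]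
          rw [if_neg hia]
          by_cases him : i = m
          · rw [if_pos him, hcol1 a, if_pos rfl, him, if_pos rfl]
          · rw [if_neg him, hcol1 i, if_neg hia, if_neg him]
  | succ k ih =>
    intro V w h
    obtain ⟨L1, w1, hL1, h1, heven⟩ :=
      evenize m (Finset.univ.filter fun i => w i % 2 = 1).card k V w h le_rfl
    have hch : ∀ i, ∃ t : ℤ, w1 i = 2 * t := fun i => ⟨w1 i / 2, by have := heven i; omega⟩
    choose w2 hw2 using hch
    have h2 : ColRep m k (L1.prod * V) w2 := by
      obtain ⟨hU1, hD1, hC1, hR1⟩ := h1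
      refine ⟨hU1, hD1, hC1, fun i => ?_⟩
      rw [hR1 i, hw2 i, pow_succ]
      push_cast
      field_simp
    obtain ⟨L2, hL2, hU2, hD2, hC2⟩ := ih (L1.prod * V) w2 h2
    refine ⟨L2 ++ L1, ?_, ?_, ?_, ?_⟩ <;>
      try rw [List.prod_append, mul_assoc]
    · intro G hG
      rcases List.mem_append.mp hG with h' | h'
      · exact hL2 G h'
      · exact hL1 G h'
    · exact hU2
    · exact hD2
    · exact hC2

/-- Outer loop over the columns. -/
lemma mainLoop : ∀ (r : ℕ) (V : Matrix (Fin n) (Fin n) ℂ),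
    V ∈ Matrix.unitaryGroup (Fin n) ℂ → (∀ i j, IsDyadic (V i j)) → ColsId (n - r) V →
    ∃ L : List (Matrix (Fin n) (Fin n) ℂ), (∀ G ∈ L, IsIntGen G) ∧ L.prod * V = 1 := by
  intro r
  induction r with
  | zero =>
    intro V hU hD hC
    refine ⟨[], by simp, ?_⟩
    rw [List.prod_nil, one_mul]
    ext i c
    rw [Matrix.one_apply, hC c (by omega) i]
  | succ r ih =>
    intro V hU hD hC
    by_cases hrn : n ≤ r
    · exact ih V hU hD (by rwa [show n - (r + 1) = n - r by omega] at hC)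
    · set m : Fin n := ⟨n - (r + 1), by omega⟩ with hm
      obtain ⟨k, w, hw⟩ := exists_common_denom (fun i => V i m) (fun i => hD i m)
      have h : ColRep m k V w := ⟨hU, hD, hC, hw⟩
      obtain ⟨L1, hL1, hU1, hD1, hC1⟩ := colReduce m k V w h
      have hC1' : ColsId (n - r) (L1.prod * V) := by
        rwa [show n - r = (m : ℕ) + 1 by have hmv : (m : ℕ) = n - (r + 1) := rfl; omega]
      obtain ⟨L2, hL2, hfin⟩ := ih (L1.prod * V) hU1 hD1 hC1'
      refine ⟨L2 ++ L1, ?_, ?_⟩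
      · intro G hG
        rcases List.mem_append.mp hG with h' | h'
        · exact hL2 G h'
        · exact hL1 G h'
      · rw [List.prod_append, mul_assoc]
        exact hfin


/-- Every unitary matrix with entries in `ℤ[1/2]` is a product of the
generators `(-1)_[a]`, `X_[a,b]`, `(H⊗H)_[a,b,c,d]`. -/
theorem stmt0 (n : ℕ) (hn : 1 ≤ n) (V : Matrix (Fin n) (Fin n) ℂ)
    (hV : V ∈ Matrix.unitaryGroup (Fin n) ℂ)
    (hD : ∀ j k, IsDyadic (V j k)) :
    ∃ L : List (Matrix (Fin n) (Fin n) ℂ),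
      (∀ G ∈ L, IsIntGen G) ∧ L.prod * V = 1 := by
  exact mainLoop n V hV hD (fun c hc i => by omega)
end
end

section
/- Let n ≥ 1 and let V be an n × n unitary matrix all of whose entries lie in the ring ℤ[1/2, i] = {x₀ + x₁·i : x₀, x₁ ∈ ℤ[1/2]}. Then there exist finitely many generators G₁, …, G_ℓ, each taken from the set {i_[a], X_[a,b], (ωH)_[a,b] : a, b distinct elements of {1,…,n}}, such that G₁ ⋯ G_ℓ V = I. -/
open Matrix Complex

noncomputable section

/-- The gate `ωH = ((1+i)/2)[[1,1],[1,-1]]`, where `ω = e^{iπ/4}`. -/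
def omegaHmat : Matrix (Fin 2) (Fin 2) ℂ :=
  ((1 + Complex.I) / 2) • !![1, 1; 1, -1]

/-- `G` is one of the generators `i_[a]`, `X_[a,b]`, `(ωH)_[a,b]` with `a ≠ b`. -/
def IsGaussGen {n : ℕ} (G : Matrix (Fin n) (Fin n) ℂ) : Prop :=
  (∃ a : Fin n, G = levelOp ![a] !![Complex.I]) ∨
  (∃ a b : Fin n, a ≠ b ∧ G = levelOp ![a, b] Xmat) ∨
  (∃ a b : Fin n, a ≠ b ∧ G = levelOp ![a, b] omegaHmat)

/-- `x` belongs to the ring `ℤ[1/2, i] = {x₀ + x₁·i : x₀, x₁ ∈ ℤ[1/2]}`. -/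
def InDi (x : ℂ) : Prop :=
  ∃ x₀ x₁ : ℂ, IsDyadic x₀ ∧ IsDyadic x₁ ∧ x = x₀ + x₁ * Complex.I


local notation "GI" => GaussianInt
open GaussianInt
attribute [local instance] Classical.propDecidable

namespace S4


lemma levelOp_of_ne {n m : ℕ} (f : Fin m → Fin n) (W : Matrix (Fin m) (Fin m) ℂ) {j : Fin n}
    (hj : ∀ j', f j' ≠ j) (k : Fin n) : levelOp f W j k = if j = k then 1 else 0 := by
  unfold levelOp
  rw [Finset.sum_eq_zero, zero_add]
  · by_cases h : j = k
    · subst h; simp [hj]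
    · simp [h]
  · intro j' _
    rw [Finset.sum_eq_zero]
    intro k' _
    simp [hj j']

lemma levelOp_apply_apply {n m : ℕ} {f : Fin m → Fin n} (hf : Function.Injective f)
    (W : Matrix (Fin m) (Fin m) ℂ) (j₀ k₀ : Fin m) :
    levelOp f W (f j₀) (f k₀) = W j₀ k₀ := by
  unfold levelOp
  rw [if_neg (by rintro ⟨-, h⟩; exact h j₀ rfl), add_zero]
  simp only [hf.eq_iff]
  rw [Finset.sum_eq_single j₀]
  · rw [Finset.sum_eq_single k₀] <;> simp +contextual
  · intro j' _ hj'
    rw [Finset.sum_eq_zero]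
    intro k' _
    simp [hj']
  · simp

lemma levelOp_of_ne_right {n m : ℕ} {f : Fin m → Fin n} (W : Matrix (Fin m) (Fin m) ℂ)
    (j₀ : Fin m) {k : Fin n} (hk : ∀ k', f k' ≠ k) :
    levelOp f W (f j₀) k = 0 := by
  unfold levelOp
  rw [if_neg (by rintro ⟨h, hj⟩; exact hj j₀ rfl), add_zero]
  rw [Finset.sum_eq_zero]
  intro j' _
  rw [Finset.sum_eq_zero]
  intro k' _
  simp [hk k']

lemma sum_eq_sum_range {α : Type*} [AddCommMonoid α] {n m : ℕ} {f : Fin m → Fin n}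
    (hf : Function.Injective f) (g : Fin n → α) (hg : ∀ k, (∀ k', f k' ≠ k) → g k = 0) :
    ∑ k, g k = ∑ k', g (f k') := by
  rw [← Finset.sum_image (g := f) (f := g) (fun a _ b _ h => hf h)]
  refine (Finset.sum_subset (Finset.subset_univ _) ?_).symm
  intro x _ hx
  refine hg x fun k' h => hx ?_
  simp only [Finset.mem_image, Finset.mem_univ, true_and]
  exact ⟨k', h⟩

lemma levelOp_mulVec_apply {n m : ℕ} {f : Fin m → Fin n} (hf : Function.Injective f)
    (W : Matrix (Fin m) (Fin m) ℂ) (v : Fin n → ℂ) (j₀ : Fin m) :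
    (levelOp f W *ᵥ v) (f j₀) = ∑ k', W j₀ k' * v (f k') := by
  show ∑ k, levelOp f W (f j₀) k * v k = _
  rw [sum_eq_sum_range hf _ (fun k hk => by rw [levelOp_of_ne_right _ _ hk, zero_mul])]
  exact Finset.sum_congr rfl fun k' _ => by rw [levelOp_apply_apply hf]

lemma levelOp_mulVec_of_ne {n m : ℕ} {f : Fin m → Fin n}
    (W : Matrix (Fin m) (Fin m) ℂ) (v : Fin n → ℂ) {j : Fin n} (hj : ∀ j', f j' ≠ j) :
    (levelOp f W *ᵥ v) j = v j := by
  show ∑ k, levelOp f W j k * v k = _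
  simp [levelOp_of_ne f W hj, ite_mul]

lemma levelOp_mul {n m : ℕ} {f : Fin m → Fin n} (hf : Function.Injective f)
    (W W' : Matrix (Fin m) (Fin m) ℂ) :
    levelOp f W * levelOp f W' = levelOp f (W * W') := by
  ext j k
  rw [Matrix.mul_apply]
  by_cases hj : ∃ j₀, f j₀ = j
  · obtain ⟨j₀, rfl⟩ := hj
    rw [sum_eq_sum_range hf _ (fun l hl => by rw [levelOp_of_ne_right _ _ hl, zero_mul])]
    by_cases hk : ∃ k₀, f k₀ = k
    · obtain ⟨k₀, rfl⟩ := hk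
      rw [levelOp_apply_apply hf, Matrix.mul_apply]
      exact Finset.sum_congr rfl fun l' _ => by
        rw [levelOp_apply_apply hf, levelOp_apply_apply hf]
    · push_neg at hk
      rw [levelOp_of_ne_right _ _ hk, Finset.sum_eq_zero]
      intro l' _
      rw [levelOp_of_ne_right _ _ hk, mul_zero]
  · push_neg at hj
    rw [levelOp_of_ne f _ hj]
    simp [levelOp_of_ne _ _ hj, ite_mul]

lemma levelOp_one {n m : ℕ} {f : Fin m → Fin n} (hf : Function.Injective f) :
    levelOp f (1 : Matrix (Fin m) (Fin m) ℂ) = 1 := by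
  ext j k
  by_cases hj : ∃ j₀, f j₀ = j
  · obtain ⟨j₀, rfl⟩ := hj
    by_cases hk : ∃ k₀, f k₀ = k
    · obtain ⟨k₀, rfl⟩ := hk
      rw [levelOp_apply_apply hf, Matrix.one_apply, Matrix.one_apply]
      simp [hf.eq_iff]
    · push_neg at hk
      rw [levelOp_of_ne_right _ _ hk, Matrix.one_apply, if_neg]
      exact fun h => hk j₀ h
  · push_neg at hj
    rw [levelOp_of_ne f _ hj, Matrix.one_apply]

lemma levelOp_conjTranspose {n m : ℕ} {f : Fin m → Fin n} (hf : Function.Injective f)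
    (W : Matrix (Fin m) (Fin m) ℂ) :
    (levelOp f W)ᴴ = levelOp f Wᴴ := by
  ext j k
  rw [Matrix.conjTranspose_apply]
  by_cases hj : ∃ j₀, f j₀ = j
  · obtain ⟨j₀, rfl⟩ := hj
    by_cases hk : ∃ k₀, f k₀ = k
    · obtain ⟨k₀, rfl⟩ := hk
      rw [levelOp_apply_apply hf, levelOp_apply_apply hf, Matrix.conjTranspose_apply]
    · push_neg at hk
      rw [levelOp_of_ne_right _ _ hk, levelOp_of_ne f _ hk, if_neg (fun h => hk j₀ h.symm)]
      simp
  · push_neg at hj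
    rw [levelOp_of_ne f _ hj]
    by_cases hk : ∃ k₀, f k₀ = k
    · obtain ⟨k₀, rfl⟩ := hk
      rw [levelOp_of_ne_right _ _ hj, if_neg (fun h => hj k₀ h.symm)]
      simp
    · push_neg at hk
      rw [levelOp_of_ne f _ hk]
      by_cases h : j = k <;> simp [h, eq_comm]

lemma levelOp_mem_unitary {n m : ℕ} {f : Fin m → Fin n} (hf : Function.Injective f)
    {W : Matrix (Fin m) (Fin m) ℂ} (hW : W ∈ Matrix.unitaryGroup (Fin m) ℂ) :
    levelOp f W ∈ Matrix.unitaryGroup (Fin n) ℂ := by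
  rw [Matrix.mem_unitaryGroup_iff] at hW ⊢
  rw [Matrix.star_eq_conjTranspose] at hW ⊢
  rw [levelOp_conjTranspose hf, levelOp_mul hf, hW, levelOp_one hf]



lemma inj1 {n : ℕ} (a : Fin n) : Function.Injective ![a] := fun x y _ => Subsingleton.elim x y

lemma inj2 {n : ℕ} {a b : Fin n} (hab : a ≠ b) : Function.Injective ![a, b] := by
  intro x y h
  fin_cases x <;> fin_cases y <;> simp_all <;> exact absurd h.symm hab

lemma Imat_unitary : !![Complex.I] ∈ Matrix.unitaryGroup (Fin 1) ℂ := by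
  rw [Matrix.mem_unitaryGroup_iff]
  ext i j
  fin_cases i <;> fin_cases j <;>
    simp [Matrix.mul_apply, Fin.sum_univ_succ, Matrix.one_apply, Complex.ext_iff]

lemma Xmat_unitary : Xmat ∈ Matrix.unitaryGroup (Fin 2) ℂ := by
  rw [Matrix.mem_unitaryGroup_iff]
  ext i j
  fin_cases i <;> fin_cases j <;>
    simp [Xmat, Matrix.mul_apply, Fin.sum_univ_succ, Matrix.one_apply]

lemma omegaHmat_unitary : omegaHmat ∈ Matrix.unitaryGroup (Fin 2) ℂ := by
  rw [Matrix.mem_unitaryGroup_iff]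
  ext i j
  fin_cases i <;> fin_cases j <;>
    simp [omegaHmat, Matrix.mul_apply, Fin.sum_univ_succ, Matrix.one_apply, Complex.ext_iff,
      Complex.div_re, Complex.div_im, Complex.normSq] <;> ring_nf <;> norm_num



abbrev lam : GI := ⟨1, 1⟩
abbrev gim : GI := ⟨0, 1⟩

lemma toComplex_gim : (gim : ℂ) = Complex.I := by
  simp [toComplex_def]

lemma toComplex_lam : (lam : ℂ) = 1 + Complex.I := by
  simp [toComplex_def]

lemma lam_dvd_iff (u : GI) : lam ∣ u ↔ (u.re + u.im) % 2 = 0 := by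
  constructor
  · rintro ⟨w, rfl⟩
    simp only [Zsqrtd.re_mul, Zsqrtd.im_mul]
    omega
  · intro h
    obtain ⟨m, hm⟩ : ∃ m, u.re + u.im = 2 * m := ⟨(u.re + u.im) / 2, by omega⟩
    refine ⟨⟨m, m - u.re⟩, ?_⟩
    ext <;> simp [Zsqrtd.re_mul, Zsqrtd.im_mul] <;> omega

lemma two_dvd_iff (u : GI) : (2 : GI) ∣ u ↔ u.re % 2 = 0 ∧ u.im % 2 = 0 := by
  constructor
  · rintro ⟨w, rfl⟩
    constructor <;> simp [Zsqrtd.re_mul, Zsqrtd.im_mul] <;> omega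
  · rintro ⟨h1, h2⟩
    refine ⟨⟨u.re / 2, u.im / 2⟩, ?_⟩
    ext <;> simp [Zsqrtd.re_mul, Zsqrtd.im_mul] <;> omega

lemma sq_parity (a : ℤ) : ∃ c, a * a = a + 2 * c := by
  obtain ⟨c, hc⟩ := Int.even_mul_succ_self (a - 1)
  exact ⟨c, by linear_combination hc⟩

lemma norm_eq (u : GI) : u.norm = u.re * u.re + u.im * u.im := by
  rw [Zsqrtd.norm_def]; ring

lemma lam_not_dvd_iff (u : GI) : ¬ lam ∣ u ↔ u.norm % 2 = 1 := by
  rw [lam_dvd_iff, norm_eq]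
  obtain ⟨c, hc⟩ := sq_parity u.re
  obtain ⟨d, hd⟩ := sq_parity u.im
  rw [hc, hd]
  omega

lemma pair_adjust (u v : GI) (hu : ¬ lam ∣ u) (hv : ¬ lam ∣ v) :
    ∃ s : ℕ, s ≤ 1 ∧ (2 : GI) ∣ (u + gim ^ s * v) ∧ (2 : GI) ∣ (u - gim ^ s * v) := by
  rw [lam_dvd_iff] at hu hv
  by_cases h : (u.re + v.re) % 2 = 0
  · refine ⟨0, by norm_num, ?_, ?_⟩ <;> rw [two_dvd_iff] <;>
      constructor <;> simp [Zsqrtd.re_add, Zsqrtd.im_add, Zsqrtd.re_sub, Zsqrtd.im_sub] <;> omega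
  · refine ⟨1, le_refl _, ?_, ?_⟩ <;> rw [two_dvd_iff] <;>
      constructor <;>
      simp [Zsqrtd.re_add, Zsqrtd.im_add, Zsqrtd.re_sub, Zsqrtd.im_sub,
        Zsqrtd.re_mul, Zsqrtd.im_mul] <;> omega

lemma parallelogram (p q : GI) :
    (p + q).norm + (p - q).norm = 2 * p.norm + 2 * q.norm := by
  simp only [norm_eq, Zsqrtd.re_add, Zsqrtd.im_add, Zsqrtd.re_sub, Zsqrtd.im_sub]
  ring

lemma norm_lam : lam.norm = 2 := by simp [norm_eq]

lemma norm_gim_mul (v : GI) : (gim * v).norm = v.norm := by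
  rw [Zsqrtd.norm_mul]
  simp [norm_eq]

lemma norm_gim_pow_mul (s : ℕ) (v : GI) : (gim ^ s * v).norm = v.norm := by
  induction s with
  | zero => simp
  | succ t ih => rw [pow_succ, mul_comm (gim^t) gim, mul_assoc, norm_gim_mul, ih]

lemma int_sq_cases {a : ℤ} (h : a * a ≤ 1) : a = -1 ∨ a = 0 ∨ a = 1 := by
  have h1 : a ≤ 1 := by nlinarith
  have h2 : -1 ≤ a := by nlinarith
  omega

lemma unit_form (u : GI) (h : u.norm = 1) : ∃ t : ℕ, (Complex.I) ^ t * (u : ℂ) = 1 := by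
  have hn : u.re * u.re + u.im * u.im = 1 := by rw [← norm_eq, h]
  have h1 : u.re * u.re ≤ 1 := by nlinarith [mul_self_nonneg u.im]
  have h2 : u.im * u.im ≤ 1 := by nlinarith [mul_self_nonneg u.re]
  rcases int_sq_cases h1 with hre | hre | hre <;> rcases int_sq_cases h2 with him | him | him
  · rw [hre, him] at hn; norm_num at hn
  · exact ⟨2, by rw [toComplex_def, hre, him]; push_cast; simp [Complex.ext_iff, pow_succ]⟩
  · rw [hre, him] at hn; norm_num at hn
  · exact ⟨1, by rw [toComplex_def, hre, him]; push_cast; simp [Complex.ext_iff, pow_succ]⟩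
  · rw [hre, him] at hn; norm_num at hn
  · exact ⟨3, by rw [toComplex_def, hre, him]; push_cast; simp [Complex.ext_iff, pow_succ]⟩
  · rw [hre, him] at hn; norm_num at hn
  · exact ⟨0, by rw [toComplex_def, hre, him]; push_cast; simp [Complex.ext_iff, pow_succ]⟩
  · rw [hre, him] at hn; norm_num at hn



lemma two_pow_ne {q : ℕ} : ((2 : ℂ) ^ q) ≠ 0 := pow_ne_zero _ two_ne_zero

lemma tc_mul (x y : GI) : ((x * y : GI) : ℂ) = x * y := toComplex_mul x y
lemma tc_add (x y : GI) : ((x + y : GI) : ℂ) = x + y := toComplex_add x y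
lemma tc_pow (x : GI) (n : ℕ) : ((x ^ n : GI) : ℂ) = (x : ℂ) ^ n := by
  induction n with
  | zero => simp
  | succ t ih => rw [pow_succ, tc_mul, ih, pow_succ]
lemma tc_two : ((2 : GI) : ℂ) = 2 := by
  rw [show (2 : GI) = 1 + 1 from rfl, tc_add, toComplex_one]
  norm_num

/-- the convenient characterization of `InDi`. -/
lemma InDi_iff (x : ℂ) : InDi x ↔ ∃ (w : GI) (q : ℕ), x = (w : ℂ) / 2 ^ q := by
  constructor
  · rintro ⟨x₀, x₁, ⟨a, q, rfl⟩, ⟨b, r, rfl⟩, rfl⟩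
    refine ⟨⟨a * 2 ^ r, b * 2 ^ q⟩, q + r, ?_⟩
    rw [toComplex_def']
    push_cast
    field_simp
    ring
  · rintro ⟨w, q, rfl⟩
    refine ⟨(w.re : ℂ) / 2 ^ q, (w.im : ℂ) / 2 ^ q, ⟨w.re, q, rfl⟩, ⟨w.im, q, rfl⟩, ?_⟩
    rw [toComplex_def]
    field_simp

lemma InDi_zero : InDi 0 := (InDi_iff 0).2 ⟨0, 0, by simp⟩

lemma InDi_one : InDi 1 := (InDi_iff 1).2 ⟨1, 0, by simp⟩

lemma InDi_I : InDi Complex.I := (InDi_iff _).2 ⟨⟨0, 1⟩, 0, by simp [toComplex_def]⟩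

lemma InDi_add {x y : ℂ} (hx : InDi x) (hy : InDi y) : InDi (x + y) := by
  rw [InDi_iff] at hx hy ⊢
  obtain ⟨w, q, rfl⟩ := hx
  obtain ⟨w', q', rfl⟩ := hy
  refine ⟨w * 2 ^ q' + w' * 2 ^ q, q + q', ?_⟩
  rw [tc_add, tc_mul, tc_mul, tc_pow, tc_pow, tc_two, pow_add]
  field_simp

lemma InDi_mul {x y : ℂ} (hx : InDi x) (hy : InDi y) : InDi (x * y) := by
  rw [InDi_iff] at hx hy ⊢
  obtain ⟨w, q, rfl⟩ := hx
  obtain ⟨w', q', rfl⟩ := hy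
  refine ⟨w * w', q + q', ?_⟩
  rw [tc_mul, div_mul_div_comm, pow_add]

lemma InDi_sum {ι : Type*} (s : Finset ι) (f : ι → ℂ) (h : ∀ i ∈ s, InDi (f i)) :
    InDi (∑ i ∈ s, f i) := by
  classical
  induction s using Finset.induction_on with
  | empty => simpa using InDi_zero
  | insert _ _ hni ih =>
    rw [Finset.sum_insert hni]
    exact InDi_add (h _ (Finset.mem_insert_self _ _))
      (ih fun i hi => h i (Finset.mem_insert_of_mem hi))

lemma InDi_matrix_mul {N : ℕ} {A B : Matrix (Fin N) (Fin N) ℂ}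
    (hA : ∀ j k, InDi (A j k)) (hB : ∀ j k, InDi (B j k)) :
    ∀ j k, InDi ((A * B) j k) := by
  intro j k
  rw [Matrix.mul_apply]
  exact InDi_sum _ _ fun l _ => InDi_mul (hA j l) (hB l k)

/-- representation with denominator `(1+i)^k`. -/
lemma InDi_lam_rep {x : ℂ} (hx : InDi x) :
    ∃ (u : GI) (k : ℕ), x = (u : ℂ) / (1 + Complex.I) ^ k := by
  rw [InDi_iff] at hx
  obtain ⟨w, q, rfl⟩ := hx
  refine ⟨w * (⟨0,1⟩ : GI) ^ q, 2 * q, ?_⟩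
  have h2 : ((1 : ℂ) + Complex.I) ^ (2 * q) = 2 ^ q * Complex.I ^ q := by
    rw [pow_mul]
    rw [show ((1 : ℂ) + Complex.I) ^ 2 = 2 * Complex.I by
      rw [sq]; simp [Complex.ext_iff]; norm_num]
    rw [mul_pow]
  rw [h2, tc_mul, tc_pow]
  rw [show ((⟨0,1⟩ : GI) : ℂ) = Complex.I by simp [toComplex_def]]
  rw [mul_comm ((2:ℂ)^q), mul_comm (toComplex w)]
  rw [mul_div_mul_left _ _ (pow_ne_zero _ Complex.I_ne_zero)]

lemma one_add_I_ne : (1 : ℂ) + Complex.I ≠ 0 := by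
  simp [Complex.ext_iff]

lemma raise_rep (w : GI) {q K : ℕ} (h : q ≤ K) :
    (w : ℂ) / (1 + Complex.I) ^ q = ((w * (⟨1,1⟩ : GI) ^ (K - q) : GI) : ℂ) / (1 + Complex.I) ^ K := by
  rw [tc_mul, tc_pow]
  rw [show ((⟨1,1⟩ : GI) : ℂ) = 1 + Complex.I by simp [toComplex_def]]
  rw [← pow_sub_mul_pow (1 + Complex.I) h, mul_comm (toComplex w)]
  rw [mul_div_mul_left _ _ (pow_ne_zero _ one_add_I_ne)]



def iGate {N : ℕ} (a : Fin N) : Matrix (Fin N) (Fin N) ℂ := levelOp ![a] !![Complex.I]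
def hGate {N : ℕ} (a b : Fin N) : Matrix (Fin N) (Fin N) ℂ := levelOp ![a, b] omegaHmat
def xGate {N : ℕ} (a b : Fin N) : Matrix (Fin N) (Fin N) ℂ := levelOp ![a, b] Xmat

lemma iGate_gen {N : ℕ} (a : Fin N) : IsGaussGen (iGate a) := Or.inl ⟨a, rfl⟩
lemma xGate_gen {N : ℕ} {a b : Fin N} (hab : a ≠ b) : IsGaussGen (xGate a b) :=
  Or.inr (Or.inl ⟨a, b, hab, rfl⟩)
lemma hGate_gen {N : ℕ} {a b : Fin N} (hab : a ≠ b) : IsGaussGen (hGate a b) :=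
  Or.inr (Or.inr ⟨a, b, hab, rfl⟩)

lemma iGate_mulVec {N : ℕ} (a : Fin N) (v : Fin N → ℂ) :
    iGate a *ᵥ v = Function.update v a (Complex.I * v a) := by
  funext j
  by_cases hj : j = a
  · subst hj
    rw [Function.update_self]
    have := levelOp_mulVec_apply (inj1 j) !![Complex.I] v 0
    simpa [iGate] using this
  · rw [Function.update_of_ne hj]
    exact levelOp_mulVec_of_ne _ _ (fun j' => by fin_cases j' <;> simpa using Ne.symm hj)

lemma gate2_mulVec_a {N : ℕ} {a b : Fin N} (hab : a ≠ b) (W : Matrix (Fin 2) (Fin 2) ℂ)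
    (v : Fin N → ℂ) : (levelOp ![a, b] W *ᵥ v) a = W 0 0 * v a + W 0 1 * v b := by
  have := levelOp_mulVec_apply (inj2 hab) W v 0
  simpa [Fin.sum_univ_succ] using this

lemma gate2_mulVec_b {N : ℕ} {a b : Fin N} (hab : a ≠ b) (W : Matrix (Fin 2) (Fin 2) ℂ)
    (v : Fin N → ℂ) : (levelOp ![a, b] W *ᵥ v) b = W 1 0 * v a + W 1 1 * v b := by
  have := levelOp_mulVec_apply (inj2 hab) W v 1
  simpa [Fin.sum_univ_succ] using this

lemma gate2_mulVec_other {N : ℕ} {a b : Fin N} (W : Matrix (Fin 2) (Fin 2) ℂ)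
    (v : Fin N → ℂ) {j : Fin N} (hja : j ≠ a) (hjb : j ≠ b) :
    (levelOp ![a, b] W *ᵥ v) j = v j :=
  levelOp_mulVec_of_ne _ _ (fun j' => by
    fin_cases j' <;> simp [Ne.symm hja, Ne.symm hjb])

lemma oh00 : omegaHmat 0 0 = (1 + Complex.I) / 2 := by simp [omegaHmat]
lemma oh01 : omegaHmat 0 1 = (1 + Complex.I) / 2 := by simp [omegaHmat]
lemma oh10 : omegaHmat 1 0 = (1 + Complex.I) / 2 := by simp [omegaHmat]
lemma oh11 : omegaHmat 1 1 = -((1 + Complex.I) / 2) := by simp [omegaHmat]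
lemma x00 : Xmat 0 0 = 0 := rfl
lemma x01 : Xmat 0 1 = 1 := rfl
lemma x10 : Xmat 1 0 = 1 := rfl
lemma x11 : Xmat 1 1 = 0 := rfl

lemma replicate_iGate_mulVec {N : ℕ} (t : ℕ) (a : Fin N) (v : Fin N → ℂ) :
    (List.replicate t (iGate a)).prod *ᵥ v = Function.update v a ((Complex.I) ^ t * v a) := by
  induction t with
  | zero => simp
  | succ s ih =>
    rw [List.replicate_succ, List.prod_cons, ← Matrix.mulVec_mulVec, ih, iGate_mulVec]
    funext j
    by_cases hj : j = a
    · subst hj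
      simp only [Function.update_self]
      ring
    · simp only [Function.update_of_ne hj]

/-- Base case of column reduction: `k = 0`. -/
lemma colReduce_zero {n : ℕ} (u : Fin (n+1) → GI)
    (hs : ∑ j, (u j).norm = 1) :
    ∃ L : List (Matrix (Fin (n+1)) (Fin (n+1)) ℂ),
      (∀ G ∈ L, IsGaussGen G) ∧
      (L.prod *ᵥ fun j => ((u j : ℂ))) = fun j => if j = 0 then 1 else 0 := by
  have hnn : ∀ j, 0 ≤ (u j).norm := fun j => Zsqrtd.norm_nonneg (by norm_num) _
  obtain ⟨j₀, hj₀⟩ : ∃ j₀, (u j₀).norm ≠ 0 := by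
    by_contra h
    push_neg at h
    rw [Finset.sum_eq_zero (fun j _ => h j)] at hs
    norm_num at hs
  have hle : (u j₀).norm ≤ 1 :=
    le_of_le_of_eq (Finset.single_le_sum (fun j _ => hnn j) (Finset.mem_univ j₀)) hs
  have h1 : (u j₀).norm = 1 := by have := hnn j₀; omega
  have hz : ∀ j, j ≠ j₀ → u j = 0 := by
    intro j hj
    have hdec := Finset.add_sum_erase Finset.univ (fun j => (u j).norm) (Finset.mem_univ j₀)
    have hsum : ∑ j ∈ Finset.univ.erase j₀, (u j).norm = 0 := by
      omega
    have := (Finset.sum_eq_zero_iff_of_nonneg (fun j _ => hnn j)).1 hsum j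
      (Finset.mem_erase.2 ⟨hj, Finset.mem_univ j⟩)
    exact norm_eq_zero.1 this
  obtain ⟨t, ht⟩ := unit_form (u j₀) h1
  have hrep : (List.replicate t (iGate j₀)).prod *ᵥ (fun j => ((u j : ℂ)))
      = fun j => if j = j₀ then 1 else 0 := by
    rw [replicate_iGate_mulVec]
    funext j
    by_cases hj : j = j₀
    · subst hj
      rw [Function.update_self, if_pos rfl, ht]
    · rw [Function.update_of_ne hj, if_neg hj, hz j hj, toComplex_zero]
  by_cases hj0 : j₀ = 0
  · subst hj0
    refine ⟨List.replicate t (iGate 0), fun G hG => ?_, hrep⟩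
    rw [List.eq_of_mem_replicate hG]
    exact iGate_gen 0
  · have h0j : (0 : Fin (n+1)) ≠ j₀ := fun h => hj0 h.symm
    refine ⟨xGate 0 j₀ :: List.replicate t (iGate j₀), ?_, ?_⟩
    · intro G hG
      rcases List.mem_cons.1 hG with h | h
      · rw [h]; exact xGate_gen h0j
      · rw [List.eq_of_mem_replicate h]; exact iGate_gen j₀
    · rw [List.prod_cons, ← Matrix.mulVec_mulVec, hrep]
      show levelOp ![0, j₀] Xmat *ᵥ _ = _
      funext j
      by_cases hj : j = 0
      · subst hj
        rw [gate2_mulVec_a h0j]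
        simp [x00, x01, h0j]
      · by_cases hjj : j = j₀
        · subst hjj
          rw [gate2_mulVec_b h0j]
          simp [x10, x11, h0j, Ne.symm h0j, hj]
        · rw [gate2_mulVec_other Xmat _ hj hjj]
          simp [hj, hjj]

lemma sum_update_norm {N : ℕ} (u : Fin N → GI) (a : Fin N) (x : GI) (s : Finset (Fin N))
    (ha : a ∈ s) :
    ∑ j ∈ s, (Function.update u a x j).norm = x.norm + ∑ j ∈ s.erase a, (u j).norm := by
  rw [← Finset.add_sum_erase s _ ha, Function.update_self]
  congr 1
  exact Finset.sum_congr rfl fun j hj => by rw [Function.update_of_ne (Finset.mem_erase.1 hj).1]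

lemma norm_two_gi : (2 : GI).norm = 4 := by rw [Zsqrtd.norm_def]; norm_num

/-- Inductive step of column reduction. -/
lemma colReduce_step {n : ℕ} (k : ℕ)
    (IH : ∀ u : Fin (n+1) → GI, (∑ j, (u j).norm = 2 ^ k) →
      ∃ L : List (Matrix (Fin (n+1)) (Fin (n+1)) ℂ),
        (∀ G ∈ L, IsGaussGen G) ∧
        (L.prod *ᵥ fun j => ((u j : ℂ)) / (1 + Complex.I) ^ k) = fun j => if j = 0 then 1 else 0) :
    ∀ (c : ℕ) (u : Fin (n+1) → GI),
      (Finset.univ.filter fun j => ¬ lam ∣ u j).card = c →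
      (∑ j, (u j).norm = 2 ^ (k+1)) →
      ∃ L : List (Matrix (Fin (n+1)) (Fin (n+1)) ℂ),
        (∀ G ∈ L, IsGaussGen G) ∧
        (L.prod *ᵥ fun j => ((u j : ℂ)) / (1 + Complex.I) ^ (k+1)) =
          fun j => if j = 0 then 1 else 0 := by
  intro c
  induction c using Nat.strong_induction_on with
  | _ c ihc =>
  intro u hc hs
  by_cases hall : ∀ j, lam ∣ u j
  · -- all entries divisible by 1+i : divide out
    choose w hw using hall
    have hsw : ∑ j, (w j).norm = 2 ^ k := by
      have h2 : ∀ j, (u j).norm = 2 * (w j).norm := fun j => by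
        rw [hw j, Zsqrtd.norm_mul, norm_lam]
      rw [Finset.sum_congr rfl (fun j _ => h2 j), ← Finset.mul_sum] at hs
      have : (2:ℤ) ^ (k+1) = 2 * 2 ^ k := by ring
      omega
    obtain ⟨L, hL, hLv⟩ := IH w hsw
    refine ⟨L, hL, ?_⟩
    have hvv : (fun j => ((u j : ℂ)) / (1 + Complex.I) ^ (k+1))
        = fun j => ((w j : ℂ)) / (1 + Complex.I) ^ k := by
      funext j
      rw [hw j, tc_mul, toComplex_lam, pow_succ, mul_comm ((1:ℂ) + Complex.I) ((w j : ℂ))]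
      rw [mul_div_mul_right _ _ one_add_I_ne]
    rw [hvv]
    exact hLv
  · push_neg at hall
    obtain ⟨a, ha⟩ := hall
    have haS : a ∈ Finset.univ.filter fun j => ¬ lam ∣ u j :=
      Finset.mem_filter.2 ⟨Finset.mem_univ a, ha⟩
    have hcard2 : 1 < (Finset.univ.filter fun j => ¬ lam ∣ u j).card := by
      have hmod : (∑ j, (u j).norm) % 2
          = ((Finset.univ.filter fun j => ¬ lam ∣ u j).card : ℤ) % 2 := by
        rw [Finset.sum_int_mod]
        rw [Finset.sum_congr rfl (fun j _ => show (u j).norm % 2 = if ¬ lam ∣ u j then 1 else 0 by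
          by_cases h : lam ∣ u j
          · rw [if_neg (not_not_intro h)]
            have h2 : ¬ ((u j).norm % 2 = 1) := fun hh => (lam_not_dvd_iff (u j)).2 hh h
            omega
          · rw [if_pos h, (lam_not_dvd_iff (u j)).1 h])]
        rw [Finset.sum_boole]
      rw [hs] at hmod
      have h2k : (2:ℤ) ^ (k+1) % 2 = 0 := by
        rw [pow_succ]
        omega
      have hpos : 0 < (Finset.univ.filter fun j => ¬ lam ∣ u j).card :=
        Finset.card_pos.2 ⟨a, haS⟩
      omega
    obtain ⟨b, hbS, hba⟩ := Finset.exists_mem_ne hcard2 a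
    have hb : ¬ lam ∣ u b := (Finset.mem_filter.1 hbS).2
    have hab : a ≠ b := Ne.symm hba
    obtain ⟨s, hs1, ⟨w₁, hw₁⟩, ⟨w₂, hw₂⟩⟩ := pair_adjust (u a) (u b) ha hb
    set u' : Fin (n+1) → GI :=
      Function.update (Function.update u a (lam * w₁)) b (lam * w₂) with hu'
    have hu'a : u' a = lam * w₁ := by
      rw [hu', Function.update_of_ne hab, Function.update_self]
    have hu'b : u' b = lam * w₂ := by rw [hu', Function.update_self]
    have hu'j : ∀ j, j ≠ a → j ≠ b → u' j = u j := fun j hja hjb => by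
      rw [hu', Function.update_of_ne hjb, Function.update_of_ne hja]
    -- the number of odd entries goes down
    have hfilt : (Finset.univ.filter fun j => ¬ lam ∣ u' j)
        ⊂ (Finset.univ.filter fun j => ¬ lam ∣ u j) := by
      constructor
      · intro j hj
        have hj' := (Finset.mem_filter.1 hj).2
        have hja : j ≠ a := by
          rintro rfl
          exact hj' (hu'a ▸ Dvd.intro _ rfl)
        have hjb : j ≠ b := by
          rintro rfl
          exact hj' (hu'b ▸ Dvd.intro _ rfl)
        exact Finset.mem_filter.2 ⟨Finset.mem_univ j, (hu'j j hja hjb) ▸ hj'⟩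
      · intro hsub
        have := (Finset.mem_filter.1 (hsub haS)).2
        exact this (hu'a ▸ Dvd.intro _ rfl)
    have hclt : (Finset.univ.filter fun j => ¬ lam ∣ u' j).card < c :=
      hc ▸ Finset.card_lt_card hfilt
    -- the sum of norms is preserved
    have key : (lam * w₁).norm + (lam * w₂).norm = (u a).norm + (u b).norm := by
      have hpar := parallelogram (u a) (gim ^ s * u b)
      have h41 : (u a + gim ^ s * u b).norm = 4 * w₁.norm := by
        rw [hw₁, Zsqrtd.norm_mul, norm_two_gi]
      have h42 : (u a - gim ^ s * u b).norm = 4 * w₂.norm := by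
        rw [hw₂, Zsqrtd.norm_mul, norm_two_gi]
      have hg : (gim ^ s * u b).norm = (u b).norm := norm_gim_pow_mul s (u b)
      have hl1 : (lam * w₁).norm = 2 * w₁.norm := by rw [Zsqrtd.norm_mul, norm_lam]
      have hl2 : (lam * w₂).norm = 2 * w₂.norm := by rw [Zsqrtd.norm_mul, norm_lam]
      rw [h41, h42, hg] at hpar
      omega
    have hs' : ∑ j, (u' j).norm = 2 ^ (k+1) := by
      have hbu : b ∈ (Finset.univ : Finset (Fin (n+1))) := Finset.mem_univ b
      have hae : a ∈ (Finset.univ : Finset (Fin (n+1))).erase b :=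
        Finset.mem_erase.2 ⟨hab, Finset.mem_univ a⟩
      have e1 : ∑ j, (u' j).norm
          = (lam * w₂).norm + ∑ j ∈ Finset.univ.erase b, (Function.update u a (lam * w₁) j).norm :=
        sum_update_norm _ b _ _ hbu
      have e2 : ∑ j ∈ Finset.univ.erase b, (Function.update u a (lam * w₁) j).norm
          = (lam * w₁).norm + ∑ j ∈ (Finset.univ.erase b).erase a, (u j).norm :=
        sum_update_norm _ a _ _ hae
      have e3 : (u b).norm + ∑ j ∈ Finset.univ.erase b, (u j).norm = ∑ j, (u j).norm :=
        Finset.add_sum_erase _ (fun j => (u j).norm) hbu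
      have e4 : (u a).norm + ∑ j ∈ (Finset.univ.erase b).erase a, (u j).norm
          = ∑ j ∈ Finset.univ.erase b, (u j).norm :=
        Finset.add_sum_erase _ (fun j => (u j).norm) hae
      omega
    -- the vector identity
    have hvec : hGate a b *ᵥ ((List.replicate s (iGate b)).prod
          *ᵥ fun j => ((u j : ℂ)) / (1 + Complex.I) ^ (k+1))
        = fun j => ((u' j : ℂ)) / (1 + Complex.I) ^ (k+1) := by
      rw [replicate_iGate_mulVec]
      funext j
      show (levelOp ![a, b] omegaHmat *ᵥ _) j = _
      have hca : (Complex.I) ^ s * ((u a : ℂ) + Complex.I ^ s * (u b : ℂ)) = 0 → True := fun _ => trivial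
      have hcast : (u a : ℂ) + Complex.I ^ s * (u b : ℂ) = 2 * (w₁ : ℂ) := by
        have := congrArg GaussianInt.toComplex hw₁
        rwa [tc_add, tc_mul, tc_mul, tc_pow, tc_two, toComplex_gim] at this
      have hcast2 : (u a : ℂ) - Complex.I ^ s * (u b : ℂ) = 2 * (w₂ : ℂ) := by
        have := congrArg GaussianInt.toComplex hw₂
        rwa [toComplex_sub, tc_mul, tc_mul, tc_pow, tc_two, toComplex_gim] at this
      by_cases hja : j = a
      · subst hja
        rw [gate2_mulVec_a hab, Function.update_of_ne hab, Function.update_self]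
        rw [oh00, oh01, hu'a, tc_mul, toComplex_lam]
        linear_combination ((1 + Complex.I) / 2 / (1 + Complex.I)^(k+1)) * hcast
      · by_cases hjb : j = b
        · subst hjb
          rw [gate2_mulVec_b hab, Function.update_of_ne hab, Function.update_self]
          rw [oh10, oh11, hu'b, tc_mul, toComplex_lam]
          linear_combination ((1 + Complex.I) / 2 / (1 + Complex.I)^(k+1)) * hcast2
        · rw [gate2_mulVec_other omegaHmat _ hja hjb, Function.update_of_ne hjb,
            hu'j j hja hjb]
    obtain ⟨L', hL', hLv'⟩ := ihc _ hclt u' rfl hs'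
    refine ⟨L' ++ hGate a b :: List.replicate s (iGate b), ?_, ?_⟩
    · intro G hG
      rcases List.mem_append.1 hG with h | h
      · exact hL' G h
      · rcases List.mem_cons.1 h with h | h
        · rw [h]; exact hGate_gen hab
        · rw [List.eq_of_mem_replicate h]; exact iGate_gen b
    · rw [List.prod_append, List.prod_cons, ← Matrix.mulVec_mulVec, ← Matrix.mulVec_mulVec,
        hvec]
      exact hLv'

/-- Column reduction. -/
theorem colReduce {n : ℕ} : ∀ (k : ℕ) (u : Fin (n+1) → GI),
    (∑ j, (u j).norm = 2 ^ k) →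
    ∃ L : List (Matrix (Fin (n+1)) (Fin (n+1)) ℂ),
      (∀ G ∈ L, IsGaussGen G) ∧
      (L.prod *ᵥ fun j => ((u j : ℂ)) / (1 + Complex.I) ^ k) = fun j => if j = 0 then 1 else 0 := by
  intro k
  induction k with
  | zero =>
    intro u hs
    norm_num at hs
    obtain ⟨L, hL, hLv⟩ := colReduce_zero u hs
    refine ⟨L, hL, ?_⟩
    simpa using hLv
  | succ k IHk =>
    intro u hs
    exact colReduce_step k IHk _ u rfl hs



lemma gen_unitary {N : ℕ} {G : Matrix (Fin N) (Fin N) ℂ} (hG : IsGaussGen G) :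
    G ∈ Matrix.unitaryGroup (Fin N) ℂ := by
  rcases hG with ⟨a, rfl⟩ | ⟨a, b, hab, rfl⟩ | ⟨a, b, hab, rfl⟩
  · exact levelOp_mem_unitary (inj1 a) Imat_unitary
  · exact levelOp_mem_unitary (inj2 hab) Xmat_unitary
  · exact levelOp_mem_unitary (inj2 hab) omegaHmat_unitary

lemma InDi_of_small {m : ℕ} {W : Matrix (Fin m) (Fin m) ℂ} (hW : ∀ j k, InDi (W j k))
    {N : ℕ} {f : Fin m → Fin N} (hf : Function.Injective f) :
    ∀ j k, InDi (levelOp f W j k) := by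
  intro j k
  by_cases hj : ∃ j₀, f j₀ = j
  · obtain ⟨j₀, rfl⟩ := hj
    by_cases hk : ∃ k₀, f k₀ = k
    · obtain ⟨k₀, rfl⟩ := hk
      rw [levelOp_apply_apply hf]
      exact hW j₀ k₀
    · push_neg at hk
      rw [levelOp_of_ne_right _ _ hk]
      exact InDi_zero
  · push_neg at hj
    rw [levelOp_of_ne _ _ hj]
    split
    · exact InDi_one
    · exact InDi_zero

lemma InDi_I' : InDi Complex.I := (InDi_iff _).2 ⟨⟨0, 1⟩, 0, by simp [toComplex_def]⟩

lemma InDi_oh : InDi ((1 + Complex.I) / 2) :=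
  (InDi_iff _).2 ⟨⟨1, 1⟩, 1, by rw [toComplex_def]; push_cast; ring_nf⟩

lemma InDi_oh' : InDi (-((1 + Complex.I) / 2)) :=
  (InDi_iff _).2 ⟨⟨-1, -1⟩, 1, by rw [toComplex_def]; push_cast; ring_nf⟩

lemma gen_InDi {N : ℕ} {G : Matrix (Fin N) (Fin N) ℂ} (hG : IsGaussGen G) :
    ∀ j k, InDi (G j k) := by
  rcases hG with ⟨a, rfl⟩ | ⟨a, b, hab, rfl⟩ | ⟨a, b, hab, rfl⟩
  · refine InDi_of_small (fun j k => ?_) (inj1 a)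
    fin_cases j <;> fin_cases k <;> simpa using InDi_I'
  · refine InDi_of_small (fun j k => ?_) (inj2 hab)
    fin_cases j <;> fin_cases k <;> simp [Xmat] <;> first | exact InDi_zero | exact InDi_one
  · refine InDi_of_small (fun j k => ?_) (inj2 hab)
    fin_cases j <;> fin_cases k <;> simp [omegaHmat] <;>
      first | exact InDi_oh | simpa using InDi_oh'

lemma list_prod_InDi {N : ℕ} (L : List (Matrix (Fin N) (Fin N) ℂ))
    (h : ∀ G ∈ L, ∀ j k, InDi (G j k)) : ∀ j k, InDi (L.prod j k) := by
  induction L with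
  | nil =>
    intro j k
    rw [List.prod_nil, Matrix.one_apply]
    split
    · exact InDi_one
    · exact InDi_zero
  | cons G L ih =>
    rw [List.prod_cons]
    exact InDi_matrix_mul (h G (List.mem_cons_self))
      (ih fun G' hG' => h G' (List.mem_cons_of_mem _ hG'))

lemma normSq_one_add_I : Complex.normSq (1 + Complex.I) = 2 := by
  simp [Complex.normSq_apply]
  norm_num

lemma unitary_col_norm {m : ℕ} (V : Matrix (Fin (m+1)) (Fin (m+1)) ℂ)
    (hV : V ∈ Matrix.unitaryGroup (Fin (m+1)) ℂ) :
    ∑ j, Complex.normSq (V j 0) = 1 := by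
  have h := (Unitary.mem_iff.mp hV).1
  have h00 : ∑ j, (starRingEnd ℂ) (V j 0) * V j 0 = 1 := by
    have := congrArg (fun M : Matrix (Fin (m+1)) (Fin (m+1)) ℂ => M 0 0) h
    simpa [Matrix.mul_apply, Matrix.star_apply, Matrix.one_apply] using this
  have h2 : ∑ j, ((Complex.normSq (V j 0) : ℝ) : ℂ) = 1 := by
    rw [← h00]
    exact Finset.sum_congr rfl fun j _ => by
      rw [mul_comm, Complex.mul_conj]
  rw [← Complex.ofReal_sum] at h2
  exact_mod_cast h2

lemma col_rep {m : ℕ} (V : Matrix (Fin (m+1)) (Fin (m+1)) ℂ)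
    (hV : V ∈ Matrix.unitaryGroup (Fin (m+1)) ℂ) (hR : ∀ j k, InDi (V j k)) :
    ∃ (K : ℕ) (u : Fin (m+1) → GI),
      (∀ j, V j 0 = (u j : ℂ) / (1 + Complex.I) ^ K) ∧ ∑ j, (u j).norm = 2 ^ K := by
  have h1 : ∀ j, ∃ (u : GI) (q : ℕ), V j 0 = (u : ℂ) / (1 + Complex.I) ^ q :=
    fun j => InDi_lam_rep (hR j 0)
  choose w q hq using h1
  set K := Finset.univ.sup q with hK
  have hrep : ∀ j, V j 0 = ((w j * lam ^ (K - q j) : GI) : ℂ) / (1 + Complex.I) ^ K :=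
    fun j => by rw [hq j, raise_rep (w j) (Finset.le_sup (Finset.mem_univ j))]
  refine ⟨K, fun j => w j * lam ^ (K - q j), hrep, ?_⟩
  have hn := unitary_col_norm V hV
  have hterm : ∀ j, Complex.normSq (V j 0)
      = (((w j * lam ^ (K - q j)).norm : ℝ)) / 2 ^ K := by
    intro j
    rw [hrep j, map_div₀, intCast_real_norm, map_pow, normSq_one_add_I]
  rw [Finset.sum_congr rfl (fun j _ => hterm j), ← Finset.sum_div] at hn
  have h2K : ((2 : ℝ) ^ K) ≠ 0 := pow_ne_zero _ two_ne_zero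
  rw [div_eq_one_iff_eq h2K] at hn
  exact_mod_cast hn

lemma reduceCol {m : ℕ} (V : Matrix (Fin (m+1)) (Fin (m+1)) ℂ)
    (hV : V ∈ Matrix.unitaryGroup (Fin (m+1)) ℂ) (hR : ∀ j k, InDi (V j k)) :
    ∃ (L : List (Matrix (Fin (m+1)) (Fin (m+1)) ℂ)) (W : Matrix (Fin (m+1)) (Fin (m+1)) ℂ),
      (∀ G ∈ L, IsGaussGen G) ∧ L.prod * V = W ∧ W ∈ Matrix.unitaryGroup (Fin (m+1)) ℂ ∧
      (∀ j k, InDi (W j k)) ∧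
      (∀ j, W j 0 = if j = 0 then 1 else 0) ∧ (∀ k, W 0 k = if k = 0 then 1 else 0) := by
  obtain ⟨K, u, hrep, hnorm⟩ := col_rep V hV hR
  obtain ⟨L, hL, hLv⟩ := colReduce K u hnorm
  have hveq : (fun j => ((u j : ℂ)) / (1 + Complex.I) ^ K) = fun j => V j 0 :=
    funext fun j => (hrep j).symm
  rw [hveq] at hLv
  have hLU : L.prod ∈ Matrix.unitaryGroup (Fin (m+1)) ℂ :=
    Submonoid.list_prod_mem _ (fun G hG => gen_unitary (hL G hG))
  set W := L.prod * V with hWdef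
  have hWU : W ∈ Matrix.unitaryGroup (Fin (m+1)) ℂ := mul_mem hLU hV
  have hWD : ∀ j k, InDi (W j k) :=
    InDi_matrix_mul (list_prod_InDi L fun G hG => gen_InDi (hL G hG)) hR
  have hcol : ∀ j, W j 0 = if j = 0 then 1 else 0 := by
    intro j
    have h0 : W j 0 = (L.prod *ᵥ fun l => V l 0) j := by
      simp [hWdef, Matrix.mul_apply, Matrix.mulVec, dotProduct]
    rw [h0, hLv]
  have hrow : ∀ k, W 0 k = if k = 0 then 1 else 0 := by
    have h := (Unitary.mem_iff.mp hWU).1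
    intro k
    have hk := congrArg (fun M : Matrix (Fin (m+1)) (Fin (m+1)) ℂ => M 0 k) h
    simp only [Matrix.mul_apply, Matrix.star_apply, Matrix.one_apply] at hk
    have hsum : ∑ j, star (W j 0) * W j k = W 0 k := by
      rw [Finset.sum_eq_single 0]
      · rw [hcol 0, if_pos rfl]
        simp
      · intro j _ hj
        rw [hcol j, if_neg hj]
        simp
      · simp
    rw [hsum] at hk
    rw [hk]
    simp [eq_comm]
  exact ⟨L, W, hL, rfl, hWU, hWD, hcol, hrow⟩

/-- embedding of an `m×m` matrix as a block `1 ⊕ M`. -/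
def emb {m : ℕ} (M : Matrix (Fin m) (Fin m) ℂ) : Matrix (Fin (m+1)) (Fin (m+1)) ℂ :=
  Matrix.of fun j k =>
    Fin.cases (Fin.cases 1 (fun _ => 0) k) (fun j' => Fin.cases 0 (fun k' => M j' k') k) j

lemma emb_00 {m : ℕ} (M : Matrix (Fin m) (Fin m) ℂ) : emb M 0 0 = 1 := by simp [emb]
lemma emb_0succ {m : ℕ} (M : Matrix (Fin m) (Fin m) ℂ) (k : Fin m) :
    emb M 0 k.succ = 0 := by simp [emb]
lemma emb_succ0 {m : ℕ} (M : Matrix (Fin m) (Fin m) ℂ) (j : Fin m) :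
    emb M j.succ 0 = 0 := by simp [emb]
lemma emb_succsucc {m : ℕ} (M : Matrix (Fin m) (Fin m) ℂ) (j k : Fin m) :
    emb M j.succ k.succ = M j k := by simp [emb]

lemma emb_mul {m : ℕ} (A B : Matrix (Fin m) (Fin m) ℂ) :
    emb A * emb B = emb (A * B) := by
  ext j k
  rw [Matrix.mul_apply]
  induction j using Fin.cases with
  | zero =>
    induction k using Fin.cases with
    | zero => simp [Fin.sum_univ_succ, emb_00, emb_0succ, emb_succ0]
    | succ k => simp [Fin.sum_univ_succ, emb_00, emb_0succ, emb_succ0]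
  | succ j =>
    induction k using Fin.cases with
    | zero => simp [Fin.sum_univ_succ, emb_00, emb_0succ, emb_succ0, emb_succsucc]
    | succ k =>
      rw [Fin.sum_univ_succ]
      simp only [emb_succ0, emb_0succ, emb_succsucc, zero_mul, zero_add]
      rw [Matrix.mul_apply]

lemma emb_one {m : ℕ} : emb (1 : Matrix (Fin m) (Fin m) ℂ) = 1 := by
  ext j k
  induction j using Fin.cases with
  | zero =>
    induction k using Fin.cases with
    | zero => simp [emb_00, Matrix.one_apply]
    | succ k => simp [emb_0succ, Matrix.one_apply, (Fin.succ_ne_zero k).symm]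
  | succ j =>
    induction k using Fin.cases with
    | zero => simp [emb_succ0, Matrix.one_apply, Fin.succ_ne_zero j]
    | succ k => simp [emb_succsucc, Matrix.one_apply, Fin.succ_inj]

lemma emb_prod {m : ℕ} (L : List (Matrix (Fin m) (Fin m) ℂ)) :
    (L.map emb).prod = emb L.prod := by
  induction L with
  | nil => simp [emb_one]
  | cons G L ih => rw [List.map_cons, List.prod_cons, List.prod_cons, ih, emb_mul]

lemma emb_levelOp {m N : ℕ} {f : Fin N → Fin m} (hf : Function.Injective f)
    (W : Matrix (Fin N) (Fin N) ℂ) :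
    emb (levelOp f W) = levelOp (Fin.succ ∘ f) W := by
  have hf' : Function.Injective (Fin.succ ∘ f) := (Fin.succ_injective m).comp hf
  ext j k
  induction j using Fin.cases with
  | zero =>
    rw [levelOp_of_ne (Fin.succ ∘ f) W
      (fun j' => (Fin.succ_ne_zero (f j') : (Fin.succ ∘ f) j' ≠ 0))]
    induction k using Fin.cases with
    | zero => rw [emb_00, if_pos rfl]
    | succ k => rw [emb_0succ, if_neg (Ne.symm (Fin.succ_ne_zero k))]
  | succ j =>
    by_cases hj : ∃ j₀, f j₀ = j
    · obtain ⟨j₀, rfl⟩ := hj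
      induction k using Fin.cases with
      | zero =>
        rw [emb_succ0,
          show ((f j₀).succ) = (Fin.succ ∘ f) j₀ from rfl,
          levelOp_of_ne_right (f := Fin.succ ∘ f) W j₀
            (fun k' => (Fin.succ_ne_zero (f k') : (Fin.succ ∘ f) k' ≠ 0))]
      | succ k =>
        rw [emb_succsucc]
        by_cases hk : ∃ k₀, f k₀ = k
        · obtain ⟨k₀, rfl⟩ := hk
          rw [levelOp_apply_apply hf,
            show ((f j₀).succ) = (Fin.succ ∘ f) j₀ from rfl,
            show ((f k₀).succ) = (Fin.succ ∘ f) k₀ from rfl,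
            levelOp_apply_apply hf']
        · push_neg at hk
          rw [levelOp_of_ne_right W j₀ hk,
            show ((f j₀).succ) = (Fin.succ ∘ f) j₀ from rfl,
            levelOp_of_ne_right (f := Fin.succ ∘ f) W j₀
              (fun k' h => (hk k' (Fin.succ_injective _ h) :
                False).elim)]
    · push_neg at hj
      rw [levelOp_of_ne (Fin.succ ∘ f) W
        (fun j' h => hj j' (Fin.succ_injective _ h))]
      induction k using Fin.cases with
      | zero => rw [emb_succ0, if_neg (Fin.succ_ne_zero j)]
      | succ k =>
        rw [emb_succsucc, levelOp_of_ne _ _ hj]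
        by_cases h : j = k
        · subst h
          rw [if_pos rfl, if_pos rfl]
        · rw [if_neg h, if_neg (fun hh => h (Fin.succ_injective _ hh))]

lemma succ_comp_one {m : ℕ} (a : Fin m) : Fin.succ ∘ ![a] = ![a.succ] := by
  funext x
  fin_cases x
  rfl

lemma succ_comp_two {m : ℕ} (a b : Fin m) : Fin.succ ∘ ![a, b] = ![a.succ, b.succ] := by
  funext x
  fin_cases x <;> rfl

lemma emb_gen {m : ℕ} {G : Matrix (Fin m) (Fin m) ℂ} (hG : IsGaussGen G) :
    IsGaussGen (emb G) := by
  rcases hG with ⟨a, rfl⟩ | ⟨a, b, hab, rfl⟩ | ⟨a, b, hab, rfl⟩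
  · exact Or.inl ⟨a.succ, by rw [emb_levelOp (inj1 a), succ_comp_one]⟩
  · exact Or.inr (Or.inl ⟨a.succ, b.succ, fun h => hab (Fin.succ_injective _ h),
      by rw [emb_levelOp (inj2 hab), succ_comp_two]⟩)
  · exact Or.inr (Or.inr ⟨a.succ, b.succ, fun h => hab (Fin.succ_injective _ h),
      by rw [emb_levelOp (inj2 hab), succ_comp_two]⟩)

theorem mainAux : ∀ (m : ℕ) (V : Matrix (Fin (m+1)) (Fin (m+1)) ℂ),
    V ∈ Matrix.unitaryGroup (Fin (m+1)) ℂ → (∀ j k, InDi (V j k)) →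
    ∃ L : List (Matrix (Fin (m+1)) (Fin (m+1)) ℂ),
      (∀ G ∈ L, IsGaussGen G) ∧ L.prod * V = 1 := by
  intro m
  induction m with
  | zero =>
    intro V hV hR
    obtain ⟨L, W, hL, hLV, hWU, hWD, hcol, hrow⟩ := reduceCol V hV hR
    refine ⟨L, hL, ?_⟩
    rw [hLV]
    ext j k
    fin_cases j
    fin_cases k
    simpa using hcol 0
  | succ m' IH =>
    intro V hV hR
    obtain ⟨L, W, hL, hLV, hWU, hWD, hcol, hrow⟩ := reduceCol V hV hR
    set W' : Matrix (Fin (m'+1)) (Fin (m'+1)) ℂ := fun j k => W j.succ k.succ with hW'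
    have hWemb : W = emb W' := by
      ext j k
      induction j using Fin.cases with
      | zero =>
        induction k using Fin.cases with
        | zero => rw [emb_00, hrow 0, if_pos rfl]
        | succ k => rw [emb_0succ, hrow k.succ, if_neg (Fin.succ_ne_zero k)]
      | succ j =>
        induction k using Fin.cases with
        | zero => rw [emb_succ0, hcol j.succ, if_neg (Fin.succ_ne_zero j)]
        | succ k => rw [emb_succsucc]
    have hW'U : W' ∈ Matrix.unitaryGroup (Fin (m'+1)) ℂ := by
      rw [Matrix.mem_unitaryGroup_iff']
      have h := (Unitary.mem_iff.mp hWU).1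
      ext j k
      have hk := congrArg (fun M : Matrix (Fin (m'+2)) (Fin (m'+2)) ℂ => M j.succ k.succ) h
      simp only [Matrix.mul_apply, Matrix.star_apply, Matrix.one_apply] at hk
      rw [Fin.sum_univ_succ, hrow j.succ, if_neg (Fin.succ_ne_zero j)] at hk
      simp only [star_zero, zero_mul, zero_add, Fin.succ_inj] at hk
      simp only [Matrix.mul_apply, Matrix.star_apply, Matrix.one_apply, hW']
      exact hk
    obtain ⟨L', hL', hL'W⟩ := IH W' hW'U (fun j k => hWD j.succ k.succ)
    refine ⟨L'.map emb ++ L, ?_, ?_⟩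
    · intro G hG
      rcases List.mem_append.1 hG with h | h
      · obtain ⟨G', hG', rfl⟩ := List.mem_map.1 h
        exact emb_gen (hL' G' hG')
      · exact hL G h
    · rw [List.prod_append, mul_assoc, hLV, hWemb, emb_prod, emb_mul, hL'W, emb_one]

end S4

/-- Every unitary matrix with entries in `ℤ[1/2, i]` is a product of the
generators `i_[a]`, `X_[a,b]`, `(ωH)_[a,b]`. -/
theorem stmt4 (n : ℕ) (hn : 1 ≤ n) (V : Matrix (Fin n) (Fin n) ℂ)
    (hV : V ∈ Matrix.unitaryGroup (Fin n) ℂ)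
    (hR : ∀ j k, InDi (V j k)) :
    ∃ L : List (Matrix (Fin n) (Fin n) ℂ),
      (∀ G ∈ L, IsGaussGen G) ∧ L.prod * V = 1 := by
  obtain ⟨m, rfl⟩ : ∃ m, n = m + 1 := ⟨n - 1, by omega⟩
  exact S4.mainAux m V hV hR
end
end
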